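/- arXiv:2601.14061 — 4 statements merged into one kernel-verified Lean document; each statement's English description precedes it below -/
import Mathlib

section
/- Let μ be a compactly supported Borel probability measure on SL(2,ℝ). For every α ∈ A and all 0 ≤ γ′ ≤ γ ≤ 2: I_γ(α) ≤ I_{γ′}(α) ≤ I_γ(α) + (γ − γ′)α. -/
open MeasureTheory Filter Topology
open scoped ENNReal

noncomputable section

abbrev SL2 : Type := Matrix.SpecialLinearGroup (Fin 2) ℝ
abbrev V2 : Type := EuclideanSpace ℝ (Fin 2)
abbrev P1 : Type := Projectivization ℝ V2

instance : TopologicalSpace SL2 :=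
  inferInstanceAs (TopologicalSpace {A : Matrix (Fin 2) (Fin 2) ℝ // A.det = 1})
instance : MeasurableSpace SL2 := borel SL2
instance : BorelSpace SL2 := ⟨rfl⟩
instance : TopologicalSpace P1 :=
  inferInstanceAs (TopologicalSpace (Quotient (projectivizationSetoid ℝ V2)))
instance : MeasurableSpace P1 := borel P1
instance : BorelSpace P1 := ⟨rfl⟩

def gnorm (g : SL2) : ℝ := ‖Matrix.toEuclideanCLM (𝕜 := ℝ) (g : Matrix (Fin 2) (Fin 2) ℝ)‖

def gvec (g : SL2) (u : V2) : V2 :=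
  Matrix.toEuclideanCLM (𝕜 := ℝ) (g : Matrix (Fin 2) (Fin 2) ℝ) u

lemma gvec_mul (g h : SL2) (u : V2) : gvec g (gvec h u) = gvec (g * h) u := by
  simp [gvec, Matrix.SpecialLinearGroup.coe_mul, map_mul, ContinuousLinearMap.mul_apply]

lemma gvec_one (u : V2) : gvec 1 u = u := by
  simp [gvec]

lemma gvec_ne_zero (g : SL2) {u : V2} (hu : u ≠ 0) : gvec g u ≠ 0 := by
  intro h
  apply hu
  have h2 := congrArg (gvec g⁻¹) h
  rw [gvec_mul, inv_mul_cancel, gvec_one] at h2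
  rw [h2]
  simp [gvec]

def pact (g : SL2) (x : P1) : P1 :=
  Projectivization.mk ℝ (gvec g x.rep) (gvec_ne_zero g x.rep_nonzero)

def dP (x y : P1) : ℝ :=
  |x.rep 0 * y.rep 1 - x.rep 1 * y.rep 0| / (‖x.rep‖ * ‖y.rep‖)

def gxnorm (g : SL2) (x : P1) : ℝ := ‖gvec g x.rep‖ / ‖x.rep‖

def pInner (x y : P1) : ℝ := |(inner ℝ x.rep y.rep : ℝ)| / (‖x.rep‖ * ‖y.rep‖)

/-- The (topological) support of a measure. -/
def msupp (μ : Measure SL2) : Set SL2 :=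
  {g | ∀ U : Set SL2, IsOpen U → g ∈ U → 0 < μ U}

def IsCompactlySupported (μ : Measure SL2) : Prop :=
  ∃ K : Set SL2, IsCompact K ∧ μ Kᶜ = 0

/-- The closed semigroup generated by the support of `μ`. -/
def Smu (μ : Measure SL2) : Set SL2 :=
  closure ((Subsemigroup.closure (msupp μ) : Subsemigroup SL2) : Set SL2)

def StronglyIrreducible (μ : Measure SL2) : Prop :=
  ¬ ∃ F : Finset P1, F.Nonempty ∧ ∀ g ∈ Smu μ, ∀ x ∈ F, pact g x ∈ F

def Proximal (μ : Measure SL2) : Prop :=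
  ∃ g ∈ Smu μ, 2 < |Matrix.trace (g : Matrix (Fin 2) (Fin 2) ℝ)|

def SIP (μ : Measure SL2) : Prop := StronglyIrreducible μ ∧ Proximal μ

/-- `convPow μ n` is the `n`-th convolution power `μⁿ`. -/
def convPow (μ : Measure SL2) : ℕ → Measure SL2
  | 0 => Measure.dirac 1
  | n + 1 => Measure.map (fun p : SL2 × SL2 => p.1 * p.2) ((convPow μ n).prod μ)

def IsOmegaMinus (ω : SL2 → P1) : Prop :=
  ∀ g : SL2, 1 < gnorm g → gxnorm g (ω g) = (gnorm g)⁻¹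

def IsUpsilonPlus (υ : SL2 → P1) : Prop :=
  ∀ g : SL2, 1 < gnorm g⁻¹ → gxnorm g⁻¹ (υ g) = (gnorm g⁻¹)⁻¹

def Eball (α ε : ℝ) (n : ℕ) : Set SL2 :=
  {g | |(n : ℝ)⁻¹ * Real.log (gnorm g) - α| ≤ ε}

def Egam (ω : SL2 → P1) (γ α ε : ℝ) (n : ℕ) (x : P1) : Set SL2 :=
  {g | g ∈ Eball α ε n ∧ dP x (ω g) ≤ Real.exp (-(n : ℝ) * (γ - ε) * α)}

def EgamStar (υ : SL2 → P1) (α ε : ℝ) (n : ℕ) (x : P1) : Set SL2 :=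
  {g | g ∈ Eball α ε n ∧ dP x (υ g) ≤ Real.exp (-(n : ℝ) * (2 - ε) * α)}

def Etilde (ω : SL2 → P1) (γ α ε : ℝ) (n : ℕ) (x : P1) : Set SL2 :=
  if γ < 2 then
    {g | g ∈ Eball α ε n ∧ Real.exp (-(n : ℝ) * (γ + ε) * α) ≤ dP x (ω g) ∧
      dP x (ω g) ≤ Real.exp (-(n : ℝ) * (γ - ε) * α)}
  else Egam ω 2 α ε n x

def IfinN (μ : Measure SL2) (ω : SL2 → P1) (γ α ε : ℝ) (n : ℕ) : EReal :=
  (((n : ℝ)⁻¹ : ℝ) : EReal) * ENNReal.log (⨆ x : P1, convPow μ n (Egam ω γ α ε n x))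

def Ieps (μ : Measure SL2) (ω : SL2 → P1) (γ α ε : ℝ) : EReal :=
  Filter.atTop.limsup (fun n => IfinN μ ω γ α ε n)

def Ifinal (μ : Measure SL2) (ω : SL2 → P1) (γ α : ℝ) : EReal :=
  ⨅ (ε : ℝ) (_ : 0 < ε), Ieps μ ω γ α ε

def Aset (μ : Measure SL2) (ω : SL2 → P1) : Set ℝ :=
  {α : ℝ | Ifinal μ ω 0 α ≠ ⊥}

def I2starEps (μ : Measure SL2) (υ : SL2 → P1) (α ε : ℝ) : EReal :=
  Filter.atTop.limsup (fun n : ℕ =>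
    (((n : ℝ)⁻¹ : ℝ) : EReal) * ENNReal.log (⨆ x : P1, convPow μ n (EgamStar υ α ε n x)))

def I2star (μ : Measure SL2) (υ : SL2 → P1) (α : ℝ) : EReal :=
  ⨅ (ε : ℝ) (_ : 0 < ε), I2starEps μ υ α ε

def kSeq (μ : Measure SL2) (t : ℝ) (n : ℕ) : ℝ :=
  (n : ℝ)⁻¹ * Real.log (∫ g, gnorm g ^ t ∂ convPow μ n)

/-- `k : ℝ → ℝ` is the limit defining `k(t)`. -/
def KTendsto (μ : Measure SL2) (k : ℝ → ℝ) : Prop :=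
  ∀ t : ℝ, Filter.Tendsto (fun n => kSeq μ t n) Filter.atTop (nhds (k t))

def kplusSeq (μ : Measure SL2) (t : ℝ) (n : ℕ) : ℝ :=
  (n : ℝ)⁻¹ * Real.log (⨆ x : P1, ∫ g, gxnorm g x ^ t ∂ convPow μ n)

def kplus (μ : Measure SL2) (t : ℝ) : ℝ :=
  Filter.atTop.limsup (fun n => kplusSeq μ t n)

def sup2 (μ : Measure SL2) (ω : SL2 → P1) (t : ℝ) : EReal :=
  ⨆ α ∈ Aset μ ω, (Ifinal μ ω 2 α + ((-(t * α) : ℝ) : EReal))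

def tc (μ : Measure SL2) (ω : SL2 → P1) (k : ℝ → ℝ) : ℝ :=
  sInf {t : ℝ | sup2 μ ω t < ((k t : ℝ) : EReal)}

def zetat (μ : Measure SL2) (ω : SL2 → P1) (k : ℝ → ℝ) (t : ℝ) : ℝ :=
  sSup {ζ : ℝ |
    (⨆ α ∈ Aset μ ω, (Ifinal μ ω 2 α + ((-(t * α) + 2 * ζ * α : ℝ) : EReal)))
      < ((k t : ℝ) : EReal)}

def Pt (μ : Measure SL2) (t : ℝ) (ψ : P1 → ℝ) : P1 → ℝ :=
  fun x => ∫ g, gxnorm g x ^ t * ψ (pact g x) ∂μ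

def sl2transpose (g : SL2) : SL2 :=
  ⟨Matrix.transpose (g : Matrix (Fin 2) (Fin 2) ℝ), by rw [Matrix.det_transpose]; exact g.2⟩

def PtStar (μ : Measure SL2) (t : ℝ) (ψ : P1 → ℝ) : P1 → ℝ :=
  fun w => ∫ g, gxnorm (sl2transpose g) w ^ t * ψ (pact (sl2transpose g) w) ∂μ

def BoundedFn (f : P1 → ℝ) : Prop := ∃ M : ℝ, ∀ x, |f x| ≤ M

def IsEigenMeas (μ : Measure SL2) (t : ℝ) (ν : Measure P1) (c : ℝ) : Prop :=
  ∀ f : P1 → ℝ, Measurable f → BoundedFn f →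
    ∫ x, Pt μ t f x ∂ν = c * ∫ x, f x ∂ν

def IsEigenMeasStar (μ : Measure SL2) (t : ℝ) (ν : Measure P1) (c : ℝ) : Prop :=
  ∀ f : P1 → ℝ, Measurable f → BoundedFn f →
    ∫ x, PtStar μ t f x ∂ν = c * ∫ x, f x ∂ν

def IsFurstenberg (μ : Measure SL2) (ν : Measure P1) : Prop :=
  IsProbabilityMeasure ν ∧ ∀ f : P1 → ℝ, Measurable f → BoundedFn f →
    ∫ g, (∫ x, f (pact g x) ∂ν) ∂μ = ∫ x, f x ∂ν

def HolderWithC (C ζ : ℝ) (f : P1 → ℝ) : Prop :=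
  ∀ x y : P1, |f x - f y| ≤ C * dP x y ^ ζ

def HolderFn (ζ : ℝ) (f : P1 → ℝ) : Prop := ∃ C : ℝ, HolderWithC C ζ f

def hSemi (ζ : ℝ) (f : P1 → ℝ) : ℝ :=
  sSup {c : ℝ | ∃ x y : P1, x ≠ y ∧ c = |f x - f y| / dP x y ^ ζ}

def supNorm (f : P1 → ℝ) : ℝ := ⨆ x : P1, |f x|

def hNorm (ζ : ℝ) (f : P1 → ℝ) : ℝ := hSemi ζ f + supNorm f

def frostman (ν : Measure P1) : ℝ :=
  sSup {s : ℝ | 0 ≤ s ∧ ∃ C : ℝ, 0 < C ∧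
    ∀ x : P1, ∀ r : ℝ, 0 < r → (ν {y | dP x y ≤ r}).toReal ≤ C * r ^ s}

def rotSL (θ : ℝ) : SL2 :=
  ⟨!![Real.cos θ, -Real.sin θ; Real.sin θ, Real.cos θ], by
    simp [Matrix.det_fin_two_of]
    ring_nf
    rw [← Real.sin_sq_add_cos_sq θ]
    ring⟩

def IsRotInvariant (lam : Measure P1) : Prop :=
  IsProbabilityMeasure lam ∧ ∀ θ : ℝ, Measure.map (pact (rotSL θ)) lam = lam

def riesz (t : ℝ) (ν : Measure P1) (x : P1) : ℝ≥0∞ :=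
  ∫⁻ y, ENNReal.ofReal (dP x y) ^ t ∂ν

namespace S5
open Real Projectivization

def wedge (u v : V2) : ℝ := u 0 * v 1 - u 1 * v 0

lemma norm_sq_V2 (u : V2) : ‖u‖ ^ 2 = u 0 ^ 2 + u 1 ^ 2 := by
  rw [EuclideanSpace.norm_eq, Real.sq_sqrt (by positivity)]
  simp [Fin.sum_univ_two, sq_abs]

lemma abs_wedge_le (u v : V2) : |wedge u v| ≤ ‖u‖ * ‖v‖ := by
  have h1 := norm_sq_V2 u
  have h2 := norm_sq_V2 v
  have hu := norm_nonneg u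
  have hv := norm_nonneg v
  rw [abs_le]
  simp only [wedge]
  constructor <;> nlinarith [sq_nonneg (u 0 * v 0 + u 1 * v 1), sq_nonneg (u 0 * v 1 - u 1 * v 0),
    mul_nonneg hu hv, sq_nonneg (‖u‖ - ‖v‖), sq_nonneg (‖u‖ + ‖v‖)]

lemma smul_apply' (c : ℝ) (u : V2) (i : Fin 2) : (c • u) i = c * u i := rfl

lemma wedge_smul_smul (c d : ℝ) (u v : V2) :
    wedge (c • u) (d • v) = c * d * wedge u v := by
  simp only [wedge, smul_apply']; ring

lemma dP_mk {u v : V2} (hu : u ≠ 0) (hv : v ≠ 0) :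
    dP (Projectivization.mk ℝ u hu) (Projectivization.mk ℝ v hv)
      = |wedge u v| / (‖u‖ * ‖v‖) := by
  obtain ⟨a, ha⟩ := Projectivization.exists_smul_eq_mk_rep ℝ u hu
  obtain ⟨b, hb⟩ := Projectivization.exists_smul_eq_mk_rep ℝ v hv
  have ha' : (Projectivization.mk ℝ u hu).rep = (a : ℝ) • u := by
    rw [← ha]; rfl
  have hb' : (Projectivization.mk ℝ v hv).rep = (b : ℝ) • v := by
    rw [← hb]; rfl
  have hane : (a : ℝ) ≠ 0 := a.ne_zero
  have hbne : (b : ℝ) ≠ 0 := b.ne_zero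
  have hun : ‖u‖ ≠ 0 := norm_ne_zero_iff.2 hu
  have hvn : ‖v‖ ≠ 0 := norm_ne_zero_iff.2 hv
  show |(_ : ℝ) * _ - _ * _| / _ = _
  have : ∀ w : V2, ∀ z : V2, |w 0 * z 1 - w 1 * z 0| = |wedge w z| := fun _ _ => rfl
  rw [this]
  rw [ha', hb', wedge_smul_smul, norm_smul, norm_smul, abs_mul, abs_mul]
  field_simp [abs_ne_zero.2 hane, abs_ne_zero.2 hbne]
  simp only [Real.norm_eq_abs]; ring

end S5
namespace S5
open Real Projectivization

lemma gvec_rot_apply (θ : ℝ) (u : V2) :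
    gvec (rotSL θ) u 0 = cos θ * u 0 - sin θ * u 1 ∧
    gvec (rotSL θ) u 1 = sin θ * u 0 + cos θ * u 1 := by
  have h : ∀ i, gvec (rotSL θ) u i
      = ((rotSL θ : Matrix (Fin 2) (Fin 2) ℝ).mulVec (fun j => u j)) i := fun _ => rfl
  constructor <;>
  · rw [h]
    simp [rotSL, Matrix.mulVec, dotProduct, Fin.sum_univ_two]
    try ring

lemma norm_gvec_rot (θ : ℝ) (u : V2) : ‖gvec (rotSL θ) u‖ = ‖u‖ := by
  obtain ⟨h0, h1⟩ := gvec_rot_apply θ u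
  have hs := sin_sq_add_cos_sq θ
  rw [← Real.sqrt_sq (norm_nonneg (gvec (rotSL θ) u)), ← Real.sqrt_sq (norm_nonneg u)]
  congr 1
  rw [norm_sq_V2, norm_sq_V2, h0, h1]
  nlinarith [hs]

lemma wedge_rot_rot (a b : ℝ) (u : V2) :
    wedge (gvec (rotSL a) u) (gvec (rotSL b) u) = sin (b - a) * ‖u‖ ^ 2 := by
  obtain ⟨ha0, ha1⟩ := gvec_rot_apply a u
  obtain ⟨hb0, hb1⟩ := gvec_rot_apply b u
  rw [wedge, ha0, ha1, hb0, hb1, Real.sin_sub, norm_sq_V2]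
  ring

lemma pact_eq_mk (g : SL2) (x : P1) :
    pact g x = Projectivization.mk ℝ (gvec g x.rep) (gvec_ne_zero g x.rep_nonzero) := rfl

lemma dP_rot_rot (a b : ℝ) (x : P1) :
    dP (pact (rotSL a) x) (pact (rotSL b) x) = |sin (b - a)| := by
  rw [pact_eq_mk, pact_eq_mk, dP_mk, wedge_rot_rot, norm_gvec_rot, norm_gvec_rot]
  have hn : ‖x.rep‖ ≠ 0 := norm_ne_zero_iff.2 x.rep_nonzero
  rw [abs_mul, abs_of_nonneg (sq_nonneg ‖x.rep‖), sq, mul_div_assoc,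
    div_self (mul_ne_zero hn hn), mul_one]

end S5
namespace S5
open Real Projectivization

lemma gvec_smul (g : SL2) (c : ℝ) (u : V2) : gvec g (c • u) = c • gvec g u :=
  ContinuousLinearMap.map_smul _ c u

lemma rot_decomp (u v : V2) (husq : u 0 ^ 2 + u 1 ^ 2 = 1) (hvsq : v 0 ^ 2 + v 1 ^ 2 = 1)
    (hp : 0 ≤ u 0 * v 0 + u 1 * v 1) :
    gvec (rotSL (arcsin (wedge u v))) u = v := by
  have hsp : wedge u v ^ 2 + (u 0 * v 0 + u 1 * v 1) ^ 2 = 1 := by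
    have h : wedge u v ^ 2 + (u 0 * v 0 + u 1 * v 1) ^ 2
        = (u 0 ^ 2 + u 1 ^ 2) * (v 0 ^ 2 + v 1 ^ 2) := by rw [wedge]; ring
    rw [h, husq, hvsq, one_mul]
  have hs1 : -1 ≤ wedge u v := by nlinarith [sq_nonneg (u 0 * v 0 + u 1 * v 1)]
  have hs2 : wedge u v ≤ 1 := by nlinarith [sq_nonneg (u 0 * v 0 + u 1 * v 1)]
  have hcos : cos (arcsin (wedge u v)) = u 0 * v 0 + u 1 * v 1 := by
    rw [Real.cos_arcsin]
    have h : 1 - wedge u v ^ 2 = (u 0 * v 0 + u 1 * v 1) ^ 2 := by linarith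
    rw [h, Real.sqrt_sq hp]
  have hsin : sin (arcsin (wedge u v)) = wedge u v := Real.sin_arcsin hs1 hs2
  obtain ⟨h0, h1⟩ := gvec_rot_apply (arcsin (wedge u v)) u
  ext i
  fin_cases i
  · show gvec (rotSL (arcsin (wedge u v))) u 0 = v 0
    rw [h0, hcos, hsin, wedge]
    linear_combination (v 0) * husq
  · show gvec (rotSL (arcsin (wedge u v))) u 1 = v 1
    rw [h1, hcos, hsin, wedge]
    linear_combination (v 1) * husq

end S5
namespace S5
open Real Projectivization

lemma norm_sq_eq_one {u : V2} (h : ‖u‖ = 1) : u 0 ^ 2 + u 1 ^ 2 = 1 := by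
  have := norm_sq_V2 u; rw [h] at this; linarith [this]

lemma exists_rot (x y : P1) :
    ∃ ψ : ℝ, |ψ| ≤ π / 2 ∧ |sin ψ| = dP x y ∧ y = pact (rotSL ψ) x := by
  have hu0 : x.rep ≠ 0 := x.rep_nonzero
  have hv0 : y.rep ≠ 0 := y.rep_nonzero
  have hnu : ‖x.rep‖ ≠ 0 := norm_ne_zero_iff.2 hu0
  have hnv : ‖y.rep‖ ≠ 0 := norm_ne_zero_iff.2 hv0
  have hnup : 0 < ‖x.rep‖ := norm_pos_iff.2 hu0
  have hnvp : 0 < ‖y.rep‖ := norm_pos_iff.2 hv0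
  obtain ⟨u, hudef⟩ : ∃ u : V2, u = ‖x.rep‖⁻¹ • x.rep := ⟨_, rfl⟩
  obtain ⟨w, hwdef⟩ : ∃ w : V2, w = ‖y.rep‖⁻¹ • y.rep := ⟨_, rfl⟩
  have hu_unit : ‖u‖ = 1 := by
    rw [hudef, norm_smul, norm_inv, norm_norm, inv_mul_cancel₀ hnu]
  have hw_unit : ‖w‖ = 1 := by
    rw [hwdef, norm_smul, norm_inv, norm_norm, inv_mul_cancel₀ hnv]
  obtain ⟨e, hedef⟩ : ∃ e : ℝ, e = if 0 ≤ u 0 * w 0 + u 1 * w 1 then (1:ℝ) else -1 := ⟨_, rfl⟩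
  have he : e = 1 ∨ e = -1 := by rw [hedef]; split <;> simp
  have hene : e ≠ 0 := by rcases he with h | h <;> rw [h] <;> norm_num
  have heabs : |e| = 1 := by rcases he with h | h <;> rw [h] <;> norm_num
  have hesq : e * e = 1 := by rcases he with h | h <;> rw [h] <;> norm_num
  obtain ⟨v, hvdef⟩ : ∃ v : V2, v = e • w := ⟨_, rfl⟩
  have hv_unit : ‖v‖ = 1 := by
    rw [hvdef, norm_smul, Real.norm_eq_abs, heabs, one_mul, hw_unit]
  have hvw0 : v 0 = e * w 0 := by rw [hvdef]; rfl
  have hvw1 : v 1 = e * w 1 := by rw [hvdef]; rfl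
  have hp : 0 ≤ u 0 * v 0 + u 1 * v 1 := by
    rw [hvw0, hvw1]
    rcases le_or_gt 0 (u 0 * w 0 + u 1 * w 1) with h | h
    · have he1 : e = 1 := by rw [hedef, if_pos h]
      rw [he1]; linarith
    · have he1 : e = -1 := by rw [hedef, if_neg (not_le.2 h)]
      rw [he1]; nlinarith
  refine ⟨arcsin (wedge u v),
    abs_le.2 ⟨neg_pi_div_two_le_arcsin _, arcsin_le_pi_div_two _⟩, ?_, ?_⟩
  · have habs : |wedge u v| ≤ 1 := by
      have := abs_wedge_le u v; rw [hu_unit, hv_unit, one_mul] at this; exact this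
    rw [abs_le] at habs
    rw [Real.sin_arcsin habs.1 habs.2]
    have h1 : wedge u v = (‖x.rep‖⁻¹ * (e * ‖y.rep‖⁻¹)) * wedge x.rep y.rep := by
      rw [hudef, hvdef, hwdef, smul_smul, wedge_smul_smul]
    have hdP : dP x y = |wedge x.rep y.rep| / (‖x.rep‖ * ‖y.rep‖) := rfl
    rw [h1, hdP, abs_mul, abs_mul, abs_mul, heabs,
      abs_of_nonneg (inv_nonneg.2 hnup.le), abs_of_nonneg (inv_nonneg.2 hnvp.le)]
    field_simp
  · have hgu : gvec (rotSL (arcsin (wedge u v))) u = v :=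
      rot_decomp u v (norm_sq_eq_one hu_unit) (norm_sq_eq_one hv_unit) hp
    have hxu : x.rep = ‖x.rep‖ • u := by
      rw [hudef, smul_smul, mul_inv_cancel₀ hnu, one_smul]
    have hrep : gvec (rotSL (arcsin (wedge u v))) x.rep
        = (‖x.rep‖ * (e * ‖y.rep‖⁻¹)) • y.rep := by
      conv_lhs => rw [hxu]
      rw [gvec_smul, hgu, hvdef, hwdef, smul_smul, smul_smul, mul_assoc]
    have hmk : pact (rotSL (arcsin (wedge u v))) x = Projectivization.mk ℝ y.rep hv0 := by
      rw [pact_eq_mk]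
      exact (Projectivization.mk_eq_mk_iff' ℝ _ _ _ hv0).2 ⟨_, hrep.symm⟩
    rw [hmk]
    exact (Projectivization.mk_rep y).symm

end S5
namespace S5
open Real Projectivization

lemma cover (x : P1) (R R' : ℝ) (hR' : 0 < R') (N : ℕ)
    (hN : π / 2 * R / R' + 1 ≤ (N : ℝ)) (y : P1) (hy : dP x y ≤ R) :
    ∃ j ∈ Finset.Icc (-(N : ℤ)) (N : ℤ), dP (pact (rotSL ((j : ℝ) * R')) x) y ≤ R' := by
  obtain ⟨ψ, hψ1, hψ2, hy'⟩ := exists_rot x y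
  have hpi := Real.pi_pos
  have hψR : |ψ| ≤ π / 2 * R := by
    have h := Real.mul_abs_le_abs_sin hψ1
    rw [hψ2] at h
    have h' : 2 / π * |ψ| ≤ R := le_trans h hy
    calc |ψ| = π / 2 * (2 / π * |ψ|) := by field_simp
    _ ≤ π / 2 * R := mul_le_mul_of_nonneg_left h' (by positivity)
  have h1 : |ψ / R' - round (ψ / R')| ≤ 1 / 2 := abs_sub_round _
  have h3 : |ψ / R'| ≤ π / 2 * R / R' := by
    rw [abs_div, abs_of_pos hR']
    gcongr
  rw [abs_le] at h1 h3
  refine ⟨round (ψ / R'), ?_, ?_⟩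
  · rw [Finset.mem_Icc]
    constructor
    · have h : -(N : ℝ) ≤ (round (ψ / R') : ℝ) := by linarith
      exact_mod_cast h
    · have h : ((round (ψ / R') : ℝ)) ≤ (N : ℝ) := by linarith
      exact_mod_cast h
  · rw [hy', dP_rot_rot]
    have h5 : ψ - (round (ψ / R') : ℝ) * R' = R' * (ψ / R' - round (ψ / R')) := by
      field_simp
    calc |sin (ψ - (round (ψ / R') : ℝ) * R')| ≤ |ψ - (round (ψ / R') : ℝ) * R'| :=
        Real.abs_sin_le_abs
    _ = R' * |ψ / R' - round (ψ / R')| := by rw [h5, abs_mul, abs_of_pos hR']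
    _ ≤ R' * (1 / 2) := by
        apply mul_le_mul_of_nonneg_left _ hR'.le
        rw [abs_le]; exact h1
    _ ≤ R' := by linarith

end S5
namespace S5
open Real Projectivization Filter

lemma gvec_col (g : SL2) (i : Fin 2) (j : Fin 2) :
    gvec g (EuclideanSpace.single j 1) i = (g : Matrix (Fin 2) (Fin 2) ℝ) i j := by
  have h : gvec g (EuclideanSpace.single j 1) i
      = ((g : Matrix (Fin 2) (Fin 2) ℝ).mulVec (fun l => (EuclideanSpace.single j (1:ℝ)) l)) i :=
    rfl
  rw [h]
  simp [Matrix.mulVec, dotProduct, Fin.sum_univ_two, EuclideanSpace.single_apply]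

lemma gnorm_ge_one (g : SL2) : 1 ≤ gnorm g := by
  have hdet : (g : Matrix (Fin 2) (Fin 2) ℝ).det = 1 := g.2
  rw [Matrix.det_fin_two] at hdet
  set T := Matrix.toEuclideanCLM (𝕜 := ℝ) (g : Matrix (Fin 2) (Fin 2) ℝ) with hT
  have h0 : ‖EuclideanSpace.single (0 : Fin 2) (1:ℝ)‖ = 1 := by
    rw [EuclideanSpace.norm_single]; norm_num
  have h1 : ‖EuclideanSpace.single (1 : Fin 2) (1:ℝ)‖ = 1 := by
    rw [EuclideanSpace.norm_single]; norm_num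
  have hw : wedge (gvec g (EuclideanSpace.single 0 1)) (gvec g (EuclideanSpace.single 1 1)) = 1 := by
    rw [wedge, gvec_col, gvec_col, gvec_col, gvec_col]
    linear_combination hdet
  have hwle := abs_wedge_le (gvec g (EuclideanSpace.single 0 1)) (gvec g (EuclideanSpace.single 1 1))
  rw [hw] at hwle
  have hb0 : ‖gvec g (EuclideanSpace.single 0 1)‖ ≤ gnorm g := by
    have := (Matrix.toEuclideanCLM (𝕜 := ℝ) (g : Matrix (Fin 2) (Fin 2) ℝ)).le_opNorm
      (EuclideanSpace.single (0 : Fin 2) (1:ℝ))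
    rw [h0, mul_one] at this
    exact this
  have hb1 : ‖gvec g (EuclideanSpace.single 1 1)‖ ≤ gnorm g := by
    have := (Matrix.toEuclideanCLM (𝕜 := ℝ) (g : Matrix (Fin 2) (Fin 2) ℝ)).le_opNorm
      (EuclideanSpace.single (1 : Fin 2) (1:ℝ))
    rw [h1, mul_one] at this
    exact this
  rw [abs_one] at hwle
  have htn : (0:ℝ) ≤ gnorm g := norm_nonneg _
  nlinarith [mul_le_mul hb0 hb1 (norm_nonneg (gvec g (EuclideanSpace.single (1:Fin 2) (1:ℝ)))) htn,
    sq_nonneg (gnorm g - 1), sq_nonneg (gnorm g + 1)]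

lemma log_gnorm_nonneg (g : SL2) : 0 ≤ Real.log (gnorm g) :=
  Real.log_nonneg (gnorm_ge_one g)

/-- Galois connection for adding a real constant on `EReal`. -/
lemma ereal_add_gc (k : ℝ) :
    GaloisConnection (fun x : EReal => x + ((-k : ℝ) : EReal))
      (fun x : EReal => x + ((k : ℝ) : EReal)) := by
  intro a b
  dsimp only
  induction a using EReal.rec with
  | bot => simp
  | top =>
    simp only [EReal.top_add_coe]
    constructor
    · intro h
      have hb : b = ⊤ := top_le_iff.1 h
      rw [hb]; simp [EReal.top_add_coe]
    · intro h
      induction b using EReal.rec with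
      | bot => simp [EReal.bot_add] at h
      | top => exact le_refl _
      | coe b => exfalso; rw [← EReal.coe_add] at h; exact (EReal.coe_ne_top _) (top_le_iff.1 h)
  | coe a =>
    induction b using EReal.rec with
    | bot =>
      rw [EReal.bot_add, ← EReal.coe_add]
      simp
    | top => simp
    | coe b =>
      rw [← EReal.coe_add, ← EReal.coe_add, EReal.coe_le_coe_iff, EReal.coe_le_coe_iff]
      constructor <;> intro <;> linarith

lemma ereal_iInf_add {ι : Sort*} (f : ι → EReal) (k : ℝ) :
    (⨅ i, f i) + (k : EReal) = ⨅ i, (f i + (k : EReal)) :=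
  (ereal_add_gc k).u_iInf

lemma ereal_le_of_forall_le_add (x z : EReal) (h : ∀ δ : ℝ, 0 < δ → x ≤ z + (δ : EReal)) :
    x ≤ z := by
  induction z using EReal.rec with
  | bot => have := h 1 one_pos; rwa [EReal.bot_add] at this
  | top => exact le_top
  | coe z =>
    induction x using EReal.rec with
    | bot => exact bot_le
    | top =>
      exfalso
      have := h 1 one_pos
      rw [← EReal.coe_add] at this
      exact (EReal.coe_ne_top _) (top_le_iff.1 this)
    | coe x =>
      rw [EReal.coe_le_coe_iff]
      refine le_of_forall_pos_le_add fun δ hδ => ?_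
      have := h δ hδ
      rw [← EReal.coe_add, EReal.coe_le_coe_iff] at this
      exact this

lemma ereal_mul_real_add (t r : ℝ) (ht : 0 < t) (b : EReal) :
    (t : EReal) * ((r : EReal) + b) = ((t * r : ℝ) : EReal) + (t : EReal) * b := by
  induction b using EReal.rec with
  | bot => rw [EReal.add_bot, EReal.coe_mul_bot_of_pos ht, EReal.add_bot]
  | top => rw [EReal.coe_add_top, EReal.coe_mul_top_of_pos ht, EReal.coe_add_top]
  | coe b => rw [← EReal.coe_add, ← EReal.coe_mul, ← EReal.coe_mul, ← EReal.coe_add]; ring_nf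

lemma ereal_limsup_add_const (u v : ℕ → EReal) (k : ℝ)
    (h : ∀ᶠ n in atTop, u n ≤ v n + (k : EReal)) :
    limsup u atTop ≤ limsup v atTop + (k : EReal) := by
  calc limsup u atTop ≤ limsup (fun n => v n + ((k : ℝ) : EReal)) atTop := limsup_le_limsup h
  _ ≤ limsup v atTop + limsup (fun _ : ℕ => ((k : ℝ) : EReal)) atTop := by
      apply EReal.limsup_add_le
      · right; rw [limsup_const]; exact EReal.coe_ne_top k
      · right; rw [limsup_const]; exact EReal.coe_ne_bot k
  _ = limsup v atTop + (k : EReal) := by rw [limsup_const]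

end S5
namespace S5
open Real Projectivization Filter MeasureTheory

lemma alpha_nonneg (μ : Measure SL2) (ω : SL2 → P1) {α : ℝ} (hα : α ∈ Aset μ ω) : 0 ≤ α := by
  by_contra hneg
  push_neg at hneg
  apply hα
  have hε : 0 < -α / 2 := by linarith
  apply le_bot_iff.1
  have hlim : Ieps μ ω 0 α (-α / 2) = ⊥ := by
    have hev : ∀ᶠ n : ℕ in atTop, IfinN μ ω 0 α (-α / 2) n = (⊥ : EReal) := by
      filter_upwards [eventually_ge_atTop 1] with n hn
      have hnpos : (0 : ℝ) < (n : ℝ)⁻¹ := by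
        have : (0:ℝ) < (n:ℝ) := by exact_mod_cast hn
        positivity
      have hEb : Eball α (-α / 2) n = ∅ := by
        rw [Set.eq_empty_iff_forall_notMem]
        intro g hg
        have h1 : 0 ≤ (n : ℝ)⁻¹ * Real.log (gnorm g) :=
          mul_nonneg (by positivity) (log_gnorm_nonneg g)
        have hg' : |(n : ℝ)⁻¹ * Real.log (gnorm g) - α| ≤ -α / 2 := hg
        rw [abs_le] at hg'
        linarith [hg'.2]
      have hx : ∀ x : P1, convPow μ n (Egam ω 0 α (-α / 2) n x) = 0 := fun x =>
        measure_mono_null (fun g hg => hg.1) (by rw [hEb]; exact measure_empty)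
      have hsup : (⨆ x : P1, convPow μ n (Egam ω 0 α (-α / 2) n x)) = 0 :=
        bot_unique (iSup_le fun x => le_of_eq (hx x))
      rw [IfinN, hsup, ENNReal.log_zero, EReal.coe_mul_bot_of_pos hnpos]
    rw [Ieps, limsup_congr hev, limsup_const]
  calc Ifinal μ ω 0 α ≤ Ieps μ ω 0 α (-α / 2) := iInf₂_le _ hε
  _ = ⊥ := hlim

lemma Egam_mono_gamma (ω : SL2 → P1) {γ' γ α : ℝ} (ε : ℝ) (hγ : γ' ≤ γ) (hα : 0 ≤ α)
    (n : ℕ) (x : P1) : Egam ω γ α ε n x ⊆ Egam ω γ' α ε n x := by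
  rintro g ⟨h1, h2⟩
  refine ⟨h1, h2.trans (Real.exp_le_exp.2 ?_)⟩
  have hn : (0:ℝ) ≤ (n : ℝ) := Nat.cast_nonneg n
  nlinarith [mul_nonneg (mul_nonneg hn (sub_nonneg.2 hγ)) hα]

lemma IfinN_mono_gamma (μ : Measure SL2) (ω : SL2 → P1) {γ' γ α : ℝ} (ε : ℝ)
    (hγ : γ' ≤ γ) (hα : 0 ≤ α) (n : ℕ) :
    IfinN μ ω γ α ε n ≤ IfinN μ ω γ' α ε n := by
  apply mul_le_mul_of_nonneg_left
  · exact ENNReal.log_monotone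
      (iSup_mono fun x => measure_mono (Egam_mono_gamma ω ε hγ hα n x))
  · exact EReal.coe_nonneg.2 (by positivity)

lemma Ifinal_mono_gamma (μ : Measure SL2) (ω : SL2 → P1) {γ' γ α : ℝ}
    (hγ : γ' ≤ γ) (hα : 0 ≤ α) : Ifinal μ ω γ α ≤ Ifinal μ ω γ' α := by
  refine iInf_mono fun ε => iInf_mono fun hε => ?_
  exact limsup_le_limsup (Eventually.of_forall (IfinN_mono_gamma μ ω ε hγ hα))

lemma Egam_alpha_zero (ω : SL2 → P1) (γ γ' ε : ℝ) (n : ℕ) (x : P1) :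
    Egam ω γ 0 ε n x = Egam ω γ' 0 ε n x := by
  ext g; simp only [Egam, Set.mem_setOf_eq, mul_zero]

end S5
namespace S5
open Real Projectivization Filter MeasureTheory

lemma sup_bound (μ : Measure SL2) (ω : SL2 → P1) {γ' γ α : ℝ} (ε : ℝ) (hγ : γ' ≤ γ)
    (hα : 0 ≤ α) (n : ℕ) :
    (⨆ x : P1, convPow μ n (Egam ω γ' α ε n x))
      ≤ ENNReal.ofReal ((π + 5) * Real.exp ((n : ℝ) * ((γ - γ') * α)))
        * ⨆ x : P1, convPow μ n (Egam ω γ α ε n x) := by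
  have hc : 0 ≤ (n : ℝ) * ((γ - γ') * α) :=
    mul_nonneg (Nat.cast_nonneg n) (mul_nonneg (sub_nonneg.2 hγ) hα)
  set R := Real.exp (-(n : ℝ) * (γ' - ε) * α) with hRdef
  set R' := Real.exp (-(n : ℝ) * (γ - ε) * α) with hR'def
  set E := Real.exp ((n : ℝ) * ((γ - γ') * α)) with hEdef
  have hR'pos : 0 < R' := Real.exp_pos _
  have hRR' : R / R' = E := by
    rw [hRdef, hR'def, hEdef, ← Real.exp_sub]
    congr 1
    ring
  have hE1 : (1 : ℝ) ≤ E := by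
    rw [hEdef, ← Real.exp_zero]
    exact Real.exp_le_exp.2 hc
  set N := ⌈π / 2 * E⌉₊ + 1 with hNdef
  have hxpos : 0 ≤ π / 2 * E := by positivity
  have hN : π / 2 * R / R' + 1 ≤ (N : ℝ) := by
    rw [hNdef]
    push_cast
    have h := Nat.le_ceil (π / 2 * E)
    have heq : π / 2 * R / R' = π / 2 * (R / R') := by ring
    rw [heq, hRR']
    linarith
  have hcard : (((Finset.Icc (-(N : ℤ)) (N : ℤ)).card : ℕ) : ℝ≥0∞)
      ≤ ENNReal.ofReal ((π + 5) * E) := by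
    have h1 : (Finset.Icc (-(N : ℤ)) (N : ℤ)).card = 2 * N + 1 := by
      rw [Int.card_Icc]
      omega
    have hceil : (⌈π / 2 * E⌉₊ : ℝ) ≤ π / 2 * E + 1 :=
      (Nat.ceil_lt_add_one hxpos).le
    have h2 : ((2 * N + 1 : ℕ) : ℝ) ≤ (π + 5) * E := by
      push_cast [hNdef]
      nlinarith [Real.pi_pos, hE1, hceil]
    rw [h1]
    calc ((2 * N + 1 : ℕ) : ℝ≥0∞) = ENNReal.ofReal ((2 * N + 1 : ℕ) : ℝ) :=
        (ENNReal.ofReal_natCast _).symm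
    _ ≤ ENNReal.ofReal ((π + 5) * E) := ENNReal.ofReal_le_ofReal h2
  refine iSup_le fun x => ?_
  have hsub : Egam ω γ' α ε n x ⊆
      ⋃ j ∈ Finset.Icc (-(N : ℤ)) (N : ℤ), Egam ω γ α ε n (pact (rotSL ((j : ℝ) * R')) x) := by
    rintro g ⟨h1, h2⟩
    obtain ⟨j, hj, hjd⟩ := cover x R R' hR'pos N hN (ω g) h2
    exact Set.mem_biUnion hj ⟨h1, hjd⟩
  calc convPow μ n (Egam ω γ' α ε n x)
      ≤ convPow μ n (⋃ j ∈ Finset.Icc (-(N : ℤ)) (N : ℤ),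
          Egam ω γ α ε n (pact (rotSL ((j : ℝ) * R')) x)) := measure_mono hsub
  _ ≤ ∑ j ∈ Finset.Icc (-(N : ℤ)) (N : ℤ),
        convPow μ n (Egam ω γ α ε n (pact (rotSL ((j : ℝ) * R')) x)) :=
      measure_biUnion_finset_le _ _
  _ ≤ ∑ _j ∈ Finset.Icc (-(N : ℤ)) (N : ℤ), ⨆ y : P1, convPow μ n (Egam ω γ α ε n y) :=
      Finset.sum_le_sum fun j _ => le_iSup (fun y : P1 => convPow μ n (Egam ω γ α ε n y)) _
  _ = (((Finset.Icc (-(N : ℤ)) (N : ℤ)).card : ℕ) : ℝ≥0∞)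
        * ⨆ y : P1, convPow μ n (Egam ω γ α ε n y) := by
      rw [Finset.sum_const, nsmul_eq_mul]
  _ ≤ ENNReal.ofReal ((π + 5) * E) * ⨆ y : P1, convPow μ n (Egam ω γ α ε n y) :=
      mul_le_mul_left hcard _

end S5
namespace S5
open Real Projectivization Filter MeasureTheory

lemma Ieps_key (μ : Measure SL2) (ω : SL2 → P1) {γ' γ α : ℝ} (hγ : γ' ≤ γ) (hα : 0 ≤ α)
    (ε : ℝ) {δ : ℝ} (hδ : 0 < δ) :
    Ieps μ ω γ' α ε ≤ Ieps μ ω γ α ε + (((γ - γ') * α + δ : ℝ) : EReal) := by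
  apply ereal_limsup_add_const
  filter_upwards [eventually_ge_atTop (max 1 (⌈Real.log (π + 5) / δ⌉₊ + 1))] with n hn
  have hn1 : 1 ≤ n := le_trans (le_max_left _ _) hn
  have hnR : (0 : ℝ) < (n : ℝ) := by exact_mod_cast hn1
  have hinv : (0 : ℝ) < (n : ℝ)⁻¹ := by positivity
  have hlog := ENNReal.log_monotone (sup_bound μ ω ε hγ hα n)
  rw [ENNReal.log_mul_add, ENNReal.log_ofReal_of_pos (by positivity)] at hlog
  have hB : IfinN μ ω γ' α ε n
      ≤ (((n : ℝ)⁻¹ : ℝ) : EReal) * ((↑(Real.log ((π + 5) * Real.exp ((n : ℝ) * ((γ - γ') * α)))) : EReal)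
        + ENNReal.log (⨆ x : P1, convPow μ n (Egam ω γ α ε n x))) :=
    mul_le_mul_of_nonneg_left hlog (EReal.coe_nonneg.2 hinv.le)
  rw [ereal_mul_real_add _ _ hinv] at hB
  have hr : (n : ℝ)⁻¹ * Real.log ((π + 5) * Real.exp ((n : ℝ) * ((γ - γ') * α)))
      ≤ (γ - γ') * α + δ := by
    rw [Real.log_mul (by positivity) (Real.exp_ne_zero _), Real.log_exp, mul_add]
    have h1 : (n : ℝ)⁻¹ * ((n : ℝ) * ((γ - γ') * α)) = (γ - γ') * α := by field_simp
    have hnb : Real.log (π + 5) / δ ≤ (n : ℝ) := by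
      have hc := Nat.le_ceil (Real.log (π + 5) / δ)
      have hn2 : (⌈Real.log (π + 5) / δ⌉₊ + 1 : ℕ) ≤ n := le_trans (le_max_right _ _) hn
      have : ((⌈Real.log (π + 5) / δ⌉₊ + 1 : ℕ) : ℝ) ≤ (n : ℝ) := by exact_mod_cast hn2
      push_cast at this
      linarith
    have h2 : (n : ℝ)⁻¹ * Real.log (π + 5) ≤ δ := by
      rw [inv_mul_le_iff₀ hnR]
      calc Real.log (π + 5) = (Real.log (π + 5) / δ) * δ := by field_simp
      _ ≤ (n : ℝ) * δ := mul_le_mul_of_nonneg_right hnb hδ.le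
    linarith [h1]
  calc IfinN μ ω γ' α ε n
      ≤ (((n : ℝ)⁻¹ * Real.log ((π + 5) * Real.exp ((n : ℝ) * ((γ - γ') * α))) : ℝ) : EReal)
        + IfinN μ ω γ α ε n := hB
  _ ≤ (((γ - γ') * α + δ : ℝ) : EReal) + IfinN μ ω γ α ε n :=
      add_le_add_left (EReal.coe_le_coe_iff.2 hr) _
  _ = IfinN μ ω γ α ε n + (((γ - γ') * α + δ : ℝ) : EReal) := add_comm _ _

end S5

/-- For `α ∈ A` and `0 ≤ γ' ≤ γ ≤ 2`:
`I_γ(α) ≤ I_{γ'}(α) ≤ I_γ(α) + (γ-γ')α`. -/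
theorem statement5 (μ : Measure SL2) [IsProbabilityMeasure μ]
    (hcs : IsCompactlySupported μ)
    (ω : SL2 → P1) (hω : IsOmegaMinus ω)
    (α : ℝ) (hα : α ∈ Aset μ ω)
    (γ' γ : ℝ) (h1 : 0 ≤ γ') (h2 : γ' ≤ γ) (h3 : γ ≤ 2) :
    Ifinal μ ω γ α ≤ Ifinal μ ω γ' α ∧
      Ifinal μ ω γ' α ≤ Ifinal μ ω γ α + (((γ - γ') * α : ℝ) : EReal) := by
  have hα0 : 0 ≤ α := S5.alpha_nonneg μ ω hα
  refine ⟨S5.Ifinal_mono_gamma μ ω h2 hα0, ?_⟩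
  rcases eq_or_lt_of_le hα0 with heq | hpos
  · subst heq
    have hE : ∀ ε (n : ℕ) x, Egam ω γ' 0 ε n x = Egam ω γ 0 ε n x := fun ε n x =>
      S5.Egam_alpha_zero ω γ' γ ε n x
    have hI : Ifinal μ ω γ' 0 = Ifinal μ ω γ 0 := by
      simp only [Ifinal, Ieps, IfinN, hE]
    rw [hI, mul_zero]
    simp
  · have key : ∀ δ : ℝ, 0 < δ →
        Ifinal μ ω γ' α ≤ Ifinal μ ω γ α + (((γ - γ') * α + δ : ℝ) : EReal) := by
      intro δ hδ
      calc Ifinal μ ω γ' α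
          ≤ ⨅ (ε : ℝ) (_ : 0 < ε), (Ieps μ ω γ α ε + (((γ - γ') * α + δ : ℝ) : EReal)) :=
          le_iInf fun ε => le_iInf fun hε =>
            (iInf₂_le ε hε).trans (S5.Ieps_key μ ω h2 hα0 ε hδ)
      _ = Ifinal μ ω γ α + (((γ - γ') * α + δ : ℝ) : EReal) :=
          ((S5.ereal_add_gc ((γ - γ') * α + δ)).u_iInf₂).symm
    refine S5.ereal_le_of_forall_le_add _ _ fun δ hδ => ?_
    have h := key δ hδ
    rwa [EReal.coe_add, ← add_assoc] at h
end
end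

section
/- Let μ be a compactly supported Borel probability measure on SL(2,ℝ). Suppose (α_k, γ_k) ∈ [0,∞) × [0,2] converges to (α, γ) ∈ [0,∞) × [0,2], and let ε_k > 0 with ε_k → 0. Then limsup_{k→∞} I_{γ_k}(α_k) ≤ limsup_{k→∞} I_{γ_k}(α_k, ε_k) ≤ I_γ(α). In particular, the map (α, γ) ↦ I_γ(α), taking values in ℝ ∪ {−∞}, is upper semicontinuous on [0,∞) × [0,2]. -/
open MeasureTheory Filter Topology
open scoped ENNReal

noncomputable section

lemma dP_le_one (x y : P1) : dP x y ≤ 1 := by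
  have hx := x.rep_nonzero
  have hy := y.rep_nonzero
  have hx' : 0 < ‖x.rep‖ := norm_pos_iff.mpr hx
  have hy' : 0 < ‖y.rep‖ := norm_pos_iff.mpr hy
  have hnx : ‖x.rep‖ ^ 2 = x.rep 0 ^ 2 + x.rep 1 ^ 2 := by
    rw [EuclideanSpace.norm_eq, Real.sq_sqrt (by positivity)]
    simp [Fin.sum_univ_two, Real.norm_eq_abs, sq_abs]
  have hny : ‖y.rep‖ ^ 2 = y.rep 0 ^ 2 + y.rep 1 ^ 2 := by
    rw [EuclideanSpace.norm_eq, Real.sq_sqrt (by positivity)]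
    simp [Fin.sum_univ_two, Real.norm_eq_abs, sq_abs]
  rw [dP, div_le_one (by positivity), abs_le]
  constructor
  · nlinarith [sq_nonneg (x.rep 0 * y.rep 0 + x.rep 1 * y.rep 1), mul_pos hx' hy',
      sq_nonneg (x.rep 0 * y.rep 1 - x.rep 1 * y.rep 0 + ‖x.rep‖ * ‖y.rep‖)]
  · nlinarith [sq_nonneg (x.rep 0 * y.rep 0 + x.rep 1 * y.rep 1), mul_pos hx' hy',
      sq_nonneg (x.rep 0 * y.rep 1 - x.rep 1 * y.rep 0 - ‖x.rep‖ * ‖y.rep‖)]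

lemma Egam_subset (ω : SL2 → P1) {γ₁ α₁ ε₁ γ₂ α₂ ε₂ : ℝ}
    (h1 : ε₁ + |α₁ - α₂| ≤ ε₂)
    (h2 : (γ₂ - ε₂) * α₂ ≤ (γ₁ - ε₁) * α₁ ∨ (γ₂ - ε₂) * α₂ ≤ 0)
    (n : ℕ) (x : P1) : Egam ω γ₁ α₁ ε₁ n x ⊆ Egam ω γ₂ α₂ ε₂ n x := by
  rintro g ⟨hE, hd⟩
  have hn : (0 : ℝ) ≤ (n : ℝ) := Nat.cast_nonneg n
  refine ⟨?_, ?_⟩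
  · simp only [Eball, Set.mem_setOf_eq] at hE ⊢
    calc |(n : ℝ)⁻¹ * Real.log (gnorm g) - α₂|
        ≤ |(n : ℝ)⁻¹ * Real.log (gnorm g) - α₁| + |α₁ - α₂| := abs_sub_le _ _ _
      _ ≤ ε₂ := by linarith
  · rcases h2 with h2 | h2
    · refine hd.trans (Real.exp_le_exp.2 ?_)
      nlinarith [mul_le_mul_of_nonneg_left h2 hn]
    · refine (dP_le_one _ _).trans (Real.one_le_exp ?_)
      nlinarith [mul_nonneg hn (neg_nonneg.2 h2)]

lemma Ieps_mono (μ : Measure SL2) (ω : SL2 → P1) {γ₁ α₁ ε₁ γ₂ α₂ ε₂ : ℝ}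
    (h1 : ε₁ + |α₁ - α₂| ≤ ε₂)
    (h2 : (γ₂ - ε₂) * α₂ ≤ (γ₁ - ε₁) * α₁ ∨ (γ₂ - ε₂) * α₂ ≤ 0) :
    Ieps μ ω γ₁ α₁ ε₁ ≤ Ieps μ ω γ₂ α₂ ε₂ := by
  refine Filter.limsup_le_limsup (Filter.Eventually.of_forall fun n => ?_)
  refine mul_le_mul_of_nonneg_left
    (ENNReal.log_monotone (iSup_mono fun x => measure_mono (Egam_subset ω h1 h2 n x))) ?_
  exact EReal.coe_nonneg.mpr (inv_nonneg.mpr (Nat.cast_nonneg n))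

lemma Ifinal_le_Ieps (μ : Measure SL2) (ω : SL2 → P1) (γ α : ℝ) {ε : ℝ} (h : 0 < ε) :
    Ifinal μ ω γ α ≤ Ieps μ ω γ α ε := iInf₂_le ε h

/-- Upper semicontinuity of `(α,γ) ↦ I_γ(α)`. -/
theorem statement6 (μ : Measure SL2) [IsProbabilityMeasure μ]
    (hcs : IsCompactlySupported μ)
    (ω : SL2 → P1) (hω : IsOmegaMinus ω)
    (a c : ℕ → ℝ) (α γ : ℝ)
    (ha : ∀ j, 0 ≤ a j) (hc : ∀ j, c j ∈ Set.Icc (0 : ℝ) 2)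
    (hα : 0 ≤ α) (hγ : γ ∈ Set.Icc (0 : ℝ) 2)
    (hconv : Filter.Tendsto (fun j => (a j, c j)) Filter.atTop (nhds (α, γ)))
    (ε : ℕ → ℝ) (hε : ∀ j, 0 < ε j) (hε0 : Filter.Tendsto ε Filter.atTop (nhds 0)) :
    (Filter.atTop.limsup (fun j => Ifinal μ ω (c j) (a j))
        ≤ Filter.atTop.limsup (fun j => Ieps μ ω (c j) (a j) (ε j)) ∧
      Filter.atTop.limsup (fun j => Ieps μ ω (c j) (a j) (ε j)) ≤ Ifinal μ ω γ α) ∧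
    UpperSemicontinuousOn (fun p : ℝ × ℝ => Ifinal μ ω p.2 p.1)
      (Set.Ici (0 : ℝ) ×ˢ Set.Icc (0 : ℝ) 2) := by
  have haT : Filter.Tendsto a Filter.atTop (nhds α) := (continuous_fst.tendsto _).comp hconv
  have hcT : Filter.Tendsto c Filter.atTop (nhds γ) := (continuous_snd.tendsto _).comp hconv
  refine ⟨⟨?_, ?_⟩, ?_⟩
  · exact Filter.limsup_le_limsup
      (Filter.Eventually.of_forall fun j => Ifinal_le_Ieps μ ω (c j) (a j) (hε j))
  · refine le_iInf₂ fun ε' hε' => ?_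
    have habs : ∀ᶠ j in Filter.atTop, |a j - α| < ε' / 2 := by
      have h0 : Filter.Tendsto (fun j => |a j - α|) Filter.atTop (nhds |α - α|) :=
        (haT.sub_const α).abs
      rw [sub_self, abs_zero] at h0
      exact h0.eventually (eventually_lt_nhds (by positivity))
    have heps : ∀ᶠ j in Filter.atTop, ε j < ε' / 2 :=
      hε0.eventually (eventually_lt_nhds (by positivity))
    have h2ev : ∀ᶠ j in Filter.atTop,
        ((γ - ε') * α ≤ (c j - ε j) * a j ∨ (γ - ε') * α ≤ 0) := by
      by_cases ht : (γ - ε') * α ≤ 0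
      · exact Filter.Eventually.of_forall fun j => Or.inr ht
      · push_neg at ht
        have hα' : 0 < α := by
          rcases hα.lt_or_eq with h | h
          · exact h
          · exfalso; rw [← h] at ht; simp at ht
        have hlim : Filter.Tendsto (fun j => (c j - ε j) * a j) Filter.atTop
            (nhds ((γ - 0) * α)) := (hcT.sub hε0).mul haT
        rw [sub_zero] at hlim
        have hgt : (γ - ε') * α < γ * α := by nlinarith
        exact (hlim.eventually (eventually_gt_nhds hgt)).mono fun j hj => Or.inl hj.le
    have hev : ∀ᶠ j in Filter.atTop,
        Ieps μ ω (c j) (a j) (ε j) ≤ Ieps μ ω γ α ε' := by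
      filter_upwards [habs, heps, h2ev] with j hj1 hj2 hj3
      exact Ieps_mono μ ω (by linarith) hj3
    exact Filter.limsup_le_of_le (h := hev)
  · intro p hp y hy
    rw [Set.mem_prod] at hp
    simp only [Ifinal, iInf_lt_iff] at hy
    obtain ⟨ε₀, hε₀, hlt⟩ := hy
    have hA : ∀ᶠ q : ℝ × ℝ in nhds p, |q.1 - p.1| < ε₀ / 2 := by
      have h0 : Filter.Tendsto (fun q : ℝ × ℝ => |q.1 - p.1|) (nhds p) (nhds |p.1 - p.1|) :=
        ((continuous_fst.sub continuous_const).abs).tendsto p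
      rw [sub_self, abs_zero] at h0
      exact h0.eventually (eventually_lt_nhds (by positivity))
    have hB : ∀ᶠ q : ℝ × ℝ in nhds p,
        ((p.2 - ε₀) * p.1 ≤ (q.2 - ε₀ / 2) * q.1 ∨ (p.2 - ε₀) * p.1 ≤ 0) := by
      by_cases ht : (p.2 - ε₀) * p.1 ≤ 0
      · exact Filter.Eventually.of_forall fun q => Or.inr ht
      · push_neg at ht
        have hα0 : (0 : ℝ) ≤ p.1 := hp.1
        have hp1 : 0 < p.1 := by
          rcases hα0.lt_or_eq with h | h
          · exact h
          · exfalso; rw [← h] at ht; simp at ht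
        have hcont : Filter.Tendsto (fun q : ℝ × ℝ => (q.2 - ε₀ / 2) * q.1) (nhds p)
            (nhds ((p.2 - ε₀ / 2) * p.1)) :=
          ((continuous_snd.sub continuous_const).mul continuous_fst).tendsto p
        have hgt : (p.2 - ε₀) * p.1 < (p.2 - ε₀ / 2) * p.1 := by nlinarith
        exact (hcont.eventually (eventually_gt_nhds hgt)).mono fun q hq => Or.inl hq.le
    filter_upwards [hA.filter_mono nhdsWithin_le_nhds, hB.filter_mono nhdsWithin_le_nhds]
      with q h1 h2
    calc Ifinal μ ω q.2 q.1 ≤ Ieps μ ω q.2 q.1 (ε₀ / 2) :=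
          Ifinal_le_Ieps μ ω q.2 q.1 (by positivity)
      _ ≤ Ieps μ ω p.2 p.1 ε₀ := Ieps_mono μ ω (by linarith) h2
      _ < y := hlt
end
end

section
/- Let μ be a compactly supported Borel probability measure on SL(2,ℝ) (no irreducibility assumption). Then for all t ∈ (−1, 0], the sequence (1/n) log inf_{x∈P} ∫ |gx|^t dμⁿ(g) converges as n → ∞, and its limit equals k(t). -/
open MeasureTheory Filter Topology
open scoped ENNReal

noncomputable section

namespace St11

abbrev T (g : SL2) : V2 →L[ℝ] V2 := Matrix.toEuclideanCLM (𝕜 := ℝ) (g : Matrix (Fin 2) (Fin 2) ℝ)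

lemma gvec_eq (g : SL2) (u : V2) : gvec g u = T g u := rfl
lemma gnorm_eq (g : SL2) : gnorm g = ‖T g‖ := rfl

lemma gnorm_pos (g : SL2) : 0 < gnorm g := by
  rw [gnorm_eq, norm_pos_iff]
  intro h
  have : gvec g (EuclideanSpace.single 0 1) = 0 := by
    rw [gvec_eq, h]; rfl
  refine gvec_ne_zero g (fun hz => ?_) this
  have := congrArg (fun v : V2 => v 0) hz
  simp [EuclideanSpace.single_apply] at this

lemma norm_gvec_le (g : SL2) (u : V2) : ‖gvec g u‖ ≤ gnorm g * ‖u‖ :=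
  (T g).le_opNorm u

lemma norm_gvec_ge (g : SL2) (u : V2) : ‖u‖ ≤ gnorm g⁻¹ * ‖gvec g u‖ := by
  have : gvec g⁻¹ (gvec g u) = u := by
    rw [gvec_mul, inv_mul_cancel, gvec_one]
  calc ‖u‖ = ‖gvec g⁻¹ (gvec g u)‖ := by rw [this]
    _ ≤ gnorm g⁻¹ * ‖gvec g u‖ := norm_gvec_le _ _

lemma gxnorm_le (g : SL2) (x : P1) : gxnorm g x ≤ gnorm g := by
  have h := x.rep_nonzero
  rw [gxnorm, div_le_iff₀ (norm_pos_iff.mpr h)]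
  exact norm_gvec_le g _

lemma gxnorm_ge (g : SL2) (x : P1) : (gnorm g⁻¹)⁻¹ ≤ gxnorm g x := by
  have h : (0:ℝ) < ‖x.rep‖ := norm_pos_iff.mpr x.rep_nonzero
  rw [gxnorm, le_div_iff₀ h, inv_mul_le_iff₀ (gnorm_pos g⁻¹)]
  exact norm_gvec_ge g _

lemma gxnorm_pos (g : SL2) (x : P1) : 0 < gxnorm g x :=
  lt_of_lt_of_le (inv_pos.mpr (gnorm_pos g⁻¹)) (gxnorm_ge g x)

lemma gxnorm_mk (g : SL2) (v : V2) (hv : v ≠ 0) :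
    gxnorm g (Projectivization.mk ℝ v hv) = ‖gvec g v‖ / ‖v‖ := by
  set x := Projectivization.mk ℝ v hv with hx
  have : Projectivization.mk ℝ x.rep x.rep_nonzero = Projectivization.mk ℝ v hv :=
    by rw [Projectivization.mk_rep]
  rw [Projectivization.mk_eq_mk_iff] at this
  obtain ⟨a, ha⟩ := this
  have h1 : gvec g x.rep = a • gvec g v := by
    rw [← ha, gvec_eq, gvec_eq]
    have : (a : ℝ) • v = (a : ℝ) • (v : V2) := rfl
    simp [Units.smul_def, _root_.map_smul]
  rw [gxnorm, h1, ← ha, Units.smul_def, Units.smul_def, norm_smul, norm_smul]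
  have ha0 : (a:ℝ) ≠ 0 := a.ne_zero
  have h2 : |(a:ℝ)| ≠ 0 := abs_ne_zero.mpr ha0
  rw [Real.norm_eq_abs, mul_div_mul_left _ _ h2]

end St11
namespace St11

instance : SecondCountableTopology (Matrix (Fin 2) (Fin 2) ℝ) :=
  inferInstanceAs (SecondCountableTopology (Fin 2 → Fin 2 → ℝ))

instance : SecondCountableTopology SL2 :=
  TopologicalSpace.secondCountableTopology_induced SL2 (Matrix (Fin 2) (Fin 2) ℝ) Subtype.val

instance : T2Space SL2 :=
  inferInstanceAs (T2Space {A : Matrix (Fin 2) (Fin 2) ℝ // A.det = 1})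

def matL : Matrix (Fin 2) (Fin 2) ℝ →ₗ[ℝ] (V2 →L[ℝ] V2) where
  toFun A := Matrix.toEuclideanCLM (𝕜 := ℝ) A
  map_add' A B := by simp [map_add]
  map_smul' c A := by simp [_root_.map_smul]

lemma continuous_matL : Continuous matL := matL.continuous_of_finiteDimensional

lemma continuous_coe : Continuous (fun g : SL2 => (g : Matrix (Fin 2) (Fin 2) ℝ)) :=
  continuous_subtype_val

lemma continuous_T : Continuous (fun g : SL2 => T g) :=
  continuous_matL.comp continuous_coe

lemma continuous_gnorm : Continuous gnorm :=
  continuous_norm.comp continuous_T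

lemma continuous_gvec2 : Continuous (fun p : SL2 × V2 => gvec p.1 p.2) := by
  have : Continuous (fun p : SL2 × V2 => (T p.1) p.2) :=
    isBoundedBilinearMap_apply.continuous.comp
      ((continuous_T.comp continuous_fst).prodMk continuous_snd)
  exact this

lemma continuous_gvec (u : V2) : Continuous (fun g : SL2 => gvec g u) :=
  isBoundedBilinearMap_apply.continuous.comp (continuous_T.prodMk continuous_const)

lemma continuous_mulSL : Continuous (fun p : SL2 × SL2 => p.1 * p.2) := by
  apply Continuous.subtype_mk
  have : Continuous (fun p : SL2 × SL2 =>
      (p.1 : Matrix (Fin 2) (Fin 2) ℝ) * (p.2 : Matrix (Fin 2) (Fin 2) ℝ)) :=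
    (continuous_coe.comp continuous_fst).mul (continuous_coe.comp continuous_snd)
  exact this

lemma continuous_invSL : Continuous (fun g : SL2 => g⁻¹) := by
  apply Continuous.subtype_mk
  exact continuous_coe.matrix_adjugate

lemma measurable_mulSL : Measurable (fun p : SL2 × SL2 => p.1 * p.2) :=
  continuous_mulSL.measurable

lemma convPow_prob (μ : Measure SL2) [IsProbabilityMeasure μ] (n : ℕ) :
    IsProbabilityMeasure (convPow μ n) := by
  induction n with
  | zero => rw [convPow]; infer_instance
  | succ n ih =>
    rw [convPow]
    have := ih
    exact Measure.isProbabilityMeasure_map measurable_mulSL.aemeasurable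

lemma convPow_compact (μ : Measure SL2) [IsProbabilityMeasure μ]
    (hcs : IsCompactlySupported μ) (n : ℕ) :
    ∃ K : Set SL2, IsCompact K ∧ K.Nonempty ∧ convPow μ n Kᶜ = 0 := by
  obtain ⟨K0, hK0c, hK0⟩ := hcs
  set K : Set SL2 := K0 ∪ {1} with hK
  have hKc : IsCompact K := hK0c.union isCompact_singleton
  have hKnull : μ Kᶜ = 0 := by
    refine measure_mono_null ?_ hK0
    intro g hg
    simp only [Set.mem_compl_iff, hK, Set.mem_union] at hg ⊢
    tauto
  induction n with
  | zero =>
    refine ⟨{1}, isCompact_singleton, Set.singleton_nonempty 1, ?_⟩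
    rw [convPow]
    rw [Measure.dirac_apply' _ (isClosed_singleton.measurableSet.compl)]
    simp [Set.indicator]
  | succ n ih =>
    obtain ⟨Kn, hKnc, hKnne, hKnnull⟩ := ih
    refine ⟨(fun p : SL2 × SL2 => p.1 * p.2) '' (Kn ×ˢ K),
      (hKnc.prod hKc).image continuous_mulSL,
      ⟨_, Set.mem_image_of_mem _ (Set.mk_mem_prod hKnne.choose_spec (Set.mem_union_right _ rfl))⟩, ?_⟩
    rw [convPow]
    have hmeas : MeasurableSet ((fun p : SL2 × SL2 => p.1 * p.2) '' (Kn ×ˢ K))ᶜ :=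
      (((hKnc.prod hKc).image continuous_mulSL).isClosed.measurableSet).compl
    rw [Measure.map_apply measurable_mulSL hmeas]
    have hsub : (fun p : SL2 × SL2 => p.1 * p.2) ⁻¹'
        ((fun p : SL2 × SL2 => p.1 * p.2) '' (Kn ×ˢ K))ᶜ ⊆ (Knᶜ ×ˢ Set.univ) ∪ (Set.univ ×ˢ Kᶜ) := by
      intro p hp
      simp only [Set.mem_preimage, Set.mem_compl_iff] at hp
      by_contra hc
      simp only [Set.mem_union, Set.mem_prod, Set.mem_univ, Set.mem_compl_iff, and_true,
        true_and, not_or, not_not] at hc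
      exact hp (Set.mem_image_of_mem _ (Set.mk_mem_prod hc.1 hc.2))
    refine measure_mono_null hsub ?_
    have := convPow_prob μ n
    refine le_antisymm ?_ zero_le
    calc ((convPow μ n).prod μ) ((Knᶜ ×ˢ Set.univ) ∪ (Set.univ ×ˢ Kᶜ))
        ≤ ((convPow μ n).prod μ) (Knᶜ ×ˢ Set.univ) + ((convPow μ n).prod μ) (Set.univ ×ˢ Kᶜ) :=
          measure_union_le _ _
      _ = 0 := by
          rw [Measure.prod_prod, Measure.prod_prod, hKnnull, hKnull]
          simp

end St11
namespace St11

open Real intervalIntegral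

lemma periodic_ii {f : ℝ → ℝ} {T : ℝ} (hT : 0 < T) (hp : Function.Periodic f T)
    (h0 : IntervalIntegrable f volume 0 T) (a b : ℝ) : IntervalIntegrable f volume a b := by
  have hk : ∀ k : ℤ, IntervalIntegrable f volume (k * T) ((k + 1) * T) := by
    intro k
    have h1 := h0.comp_sub_right (k * T)
    have heq : (fun x => f (x - (k : ℝ) * T)) = f := funext fun x => hp.sub_int_mul_eq k
    rw [heq] at h1
    convert h1 using 1 <;> ring
  have hn : ∀ n : ℕ, IntervalIntegrable f volume (-(n : ℝ) * T) ((n : ℝ) * T) := by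
    intro n
    induction n with
    | zero => simp
    | succ n ih =>
      have hleft := hk (-(n + 1 : ℤ))
      have hright := hk n
      push_cast at hleft hright ⊢
      have h1 : IntervalIntegrable f volume (-(↑n + 1) * T) (-(n : ℝ) * T) := by
        convert hleft using 2 <;> ring
      have h2 : IntervalIntegrable f volume ((n : ℝ) * T) ((↑n + 1) * T) := by
        convert hright using 2 <;> ring
      exact (h1.trans ih).trans h2
  obtain ⟨n, hna, hnb⟩ : ∃ n : ℕ, |a| ≤ n * T ∧ |b| ≤ n * T := by
    obtain ⟨n, hn'⟩ := exists_nat_ge (max (|a|) (|b|) / T)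
    refine ⟨n, ?_, ?_⟩ <;>
      [have := le_max_left |a| |b|; have := le_max_right |a| |b|] <;>
      · rw [div_le_iff₀ hT] at hn'
        nlinarith
  refine (hn n).mono_set ?_
  have hsub : Set.uIcc a b ⊆ Set.Icc (-(n:ℝ)*T) ((n:ℝ)*T) := by
    intro x hx
    rw [Set.mem_uIcc] at hx
    constructor <;> rcases hx with ⟨hx1, hx2⟩ | ⟨hx1, hx2⟩ <;>
      nlinarith [neg_abs_le a, le_abs_self a, neg_abs_le b, le_abs_self b]
  refine hsub.trans ?_
  rw [Set.uIcc_of_le (by nlinarith [abs_nonneg a])]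

lemma abs_cos_rpow_periodic (t : ℝ) : Function.Periodic (fun θ => |Real.cos θ| ^ t) π :=
  fun x => by simp [Real.cos_add_pi, abs_neg]

lemma abs_cos_lb {θ : ℝ} (h1 : 0 ≤ θ) (h2 : θ ≤ π) : 2 / π * |π/2 - θ| ≤ |Real.cos θ| := by
  have : |π/2 - θ| ≤ π/2 := by
    rw [abs_le]; constructor <;> linarith
  have h := Real.mul_abs_le_abs_sin (x := π/2 - θ) this
  rwa [Real.sin_pi_div_two_sub] at h

lemma cos_rpow_bound {t θ : ℝ} (ht2 : t ≤ 0) (h1 : 0 ≤ θ) (h2 : θ ≤ π) (hne : Real.cos θ ≠ 0) :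
    |Real.cos θ| ^ t ≤ (2/π)^t * |π/2 - θ| ^ t := by
  rw [← Real.mul_rpow (by positivity) (abs_nonneg _)]
  refine Real.rpow_le_rpow_of_nonpos ?_ (abs_cos_lb h1 h2) ht2
  have hθ : θ ≠ π/2 := fun h => hne (h ▸ Real.cos_pi_div_two)
  have habs : |π/2 - θ| > 0 := abs_pos.mpr (by intro h; apply hθ; linarith)
  have hpi := Real.pi_pos
  positivity

lemma measurable_abs_cos_rpow (t : ℝ) : Measurable (fun θ => |Real.cos θ| ^ t) :=
  (Real.measurable_cos.abs).pow measurable_const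

lemma cos_ii_half1 {t : ℝ} (ht1 : -1 < t) (ht2 : t ≤ 0) :
    IntervalIntegrable (fun θ => |Real.cos θ| ^ t) volume 0 (π/2) := by
  have hg : IntervalIntegrable (fun θ => (2/π)^t * (π/2 - θ) ^ t) volume 0 (π/2) := by
    have := (intervalIntegrable_rpow' (a := 0) (b := π/2) ht1).comp_sub_left (π/2)
    simpa using this.symm.const_mul ((2/π)^t)
  refine hg.mono_fun' ((measurable_abs_cos_rpow t).aestronglyMeasurable) ?_
  rw [Set.uIoc_of_le (by positivity)]
  refine (ae_restrict_mem measurableSet_Ioc).mono fun θ hθ => ?_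
  have h1 : (0:ℝ) < θ := hθ.1
  have h2 : θ ≤ π/2 := hθ.2
  show ‖|Real.cos θ| ^ t‖ ≤ _
  rw [Real.norm_eq_abs, abs_of_nonneg (Real.rpow_nonneg (abs_nonneg _) t)]
  rcases eq_or_ne (Real.cos θ) 0 with hc | hc
  · rcases eq_or_lt_of_le ht2 with h | h
    · subst h; simp
    · rw [hc, abs_zero, Real.zero_rpow h.ne]
      have hpi := Real.pi_pos
      exact mul_nonneg (Real.rpow_nonneg (by positivity) t) (Real.rpow_nonneg (by linarith) t)
  · have := cos_rpow_bound ht2 h1.le (by linarith [Real.pi_pos]) hc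
    calc |Real.cos θ| ^ t ≤ (2/π)^t * |π/2 - θ| ^ t := this
      _ = (2/π)^t * (π/2 - θ) ^ t := by rw [abs_of_nonneg (by linarith)]

lemma cos_ii_0pi {t : ℝ} (ht1 : -1 < t) (ht2 : t ≤ 0) :
    IntervalIntegrable (fun θ => |Real.cos θ| ^ t) volume 0 π := by
  have h1 := cos_ii_half1 ht1 ht2
  have h2' := (cos_ii_half1 ht1 ht2).comp_sub_left π
  have heq : (fun x => |Real.cos (π - x)| ^ t) = (fun θ => |Real.cos θ| ^ t) :=
    funext fun x => by rw [Real.cos_pi_sub, abs_neg]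
  rw [heq] at h2'
  have h2 : IntervalIntegrable (fun θ => |Real.cos θ| ^ t) volume (π/2) π := by
    have e1 : π - π/2 = π/2 := by ring
    have e2 : π - 0 = π := by ring
    rw [e1, e2] at h2'
    exact h2'.symm
  exact h1.trans h2

lemma cos_ii_all {t : ℝ} (ht1 : -1 < t) (ht2 : t ≤ 0) (a b : ℝ) :
    IntervalIntegrable (fun θ => |Real.cos θ| ^ t) volume a b :=
  periodic_ii Real.pi_pos (abs_cos_rpow_periodic t) (cos_ii_0pi ht1 ht2) a b

def ct (t : ℝ) : ℝ := ∫ θ in (0:ℝ)..π, |Real.cos θ| ^ t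

lemma shifted_cos_integral {t : ℝ} (θ₀ : ℝ) :
    ∫ θ in (0:ℝ)..π, |Real.cos (θ - θ₀)| ^ t = ct t := by
  have h1 := intervalIntegral.integral_comp_sub_right (a := 0) (b := π)
    (fun x => |Real.cos x| ^ t) θ₀
  rw [h1]
  have h2 := (abs_cos_rpow_periodic t).intervalIntegral_add_eq (-θ₀) 0
  simp only [zero_add] at h2
  rw [ct]
  convert h2 using 2 <;> ring

lemma shifted_cos_ii {t : ℝ} (ht1 : -1 < t) (ht2 : t ≤ 0) (θ₀ : ℝ) :
    IntervalIntegrable (fun θ => |Real.cos (θ - θ₀)| ^ t) volume 0 π := by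
  have := (cos_ii_all ht1 ht2 (-θ₀) (π - θ₀)).comp_sub_right θ₀
  convert this using 2 <;> ring

end St11
namespace St11

open Real

def uvec (θ : ℝ) : V2 := (WithLp.equiv 2 (Fin 2 → ℝ)).symm ![Real.cos θ, Real.sin θ]

lemma uvec_apply0 (θ : ℝ) : uvec θ 0 = Real.cos θ := rfl
lemma uvec_apply1 (θ : ℝ) : uvec θ 1 = Real.sin θ := rfl

lemma norm_uvec (θ : ℝ) : ‖uvec θ‖ = 1 := by
  rw [EuclideanSpace.norm_eq]
  rw [Fin.sum_univ_two]
  simp only [uvec_apply0, uvec_apply1, Real.norm_eq_abs, sq_abs]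
  rw [Real.cos_sq_add_sin_sq]
  exact Real.sqrt_one

lemma uvec_ne_zero (θ : ℝ) : uvec θ ≠ 0 := by
  intro h
  have := norm_uvec θ
  rw [h, norm_zero] at this
  norm_num at this

lemma continuous_uvec : Continuous uvec := by
  apply Continuous.comp (PiLp.continuous_toLp 2 (fun _ : Fin 2 => ℝ))
  apply continuous_pi
  intro i
  fin_cases i
  · exact Real.continuous_cos
  · exact Real.continuous_sin

lemma inner_uvec (θ : ℝ) (w : V2) :
    (inner ℝ (uvec θ) w : ℝ) = Real.cos θ * w 0 + Real.sin θ * w 1 := by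
  rw [PiLp.inner_apply, Fin.sum_univ_two]
  simp [uvec_apply0, uvec_apply1, RCLike.inner_apply, mul_comm]

lemma exists_unit_max (S : V2 →L[ℝ] V2) : ∃ v : V2, ‖v‖ = 1 ∧ ‖S v‖ = ‖S‖ := by
  have hcs : IsCompact (Metric.sphere (0:V2) 1) := isCompact_sphere 0 1
  have hne : (Metric.sphere (0:V2) 1).Nonempty := ⟨uvec 0, by simp [norm_uvec]⟩
  obtain ⟨v, hv, hmax⟩ := hcs.exists_isMaxOn hne
    ((continuous_norm.comp S.continuous).continuousOn)
  rw [mem_sphere_zero_iff_norm] at hv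
  refine ⟨v, hv, le_antisymm ?_ ?_⟩
  · calc ‖S v‖ ≤ ‖S‖ * ‖v‖ := S.le_opNorm v
      _ = ‖S‖ := by rw [hv, mul_one]
  · refine S.opNorm_le_bound (norm_nonneg _) fun u => ?_
    rcases eq_or_ne u 0 with rfl | hu
    · simp
    · have hnu : (0:ℝ) < ‖u‖ := norm_pos_iff.mpr hu
      have hu' : (‖u‖⁻¹ • u) ∈ Metric.sphere (0:V2) 1 := by
        rw [mem_sphere_zero_iff_norm, norm_smul, norm_inv, norm_norm, inv_mul_cancel₀ hnu.ne']
      have h3 : ‖S (‖u‖⁻¹ • u)‖ ≤ ‖S v‖ := hmax hu'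
      rw [_root_.map_smul, norm_smul, norm_inv, norm_norm] at h3
      calc ‖S u‖ = ‖u‖ * (‖u‖⁻¹ * ‖S u‖) := by field_simp
        _ ≤ ‖u‖ * ‖S v‖ := mul_le_mul_of_nonneg_left h3 hnu.le
        _ = ‖S v‖ * ‖u‖ := mul_comm _ _

lemma angle_of_unit (w : V2) (hw : ‖w‖ = 1) :
    ∃ θ₀ : ℝ, w 0 = Real.cos θ₀ ∧ w 1 = Real.sin θ₀ := by
  have hsq : w 0 ^ 2 + w 1 ^ 2 = 1 := by
    have := hw
    rw [EuclideanSpace.norm_eq, Fin.sum_univ_two] at this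
    have h2 := congrArg (· ^ 2) this
    simp only [Real.norm_eq_abs, sq_abs] at h2
    rwa [Real.sq_sqrt (by positivity), one_pow] at h2
  have h0 : -1 ≤ w 0 := by nlinarith
  have h0' : w 0 ≤ 1 := by nlinarith
  have hsqrt : Real.sqrt (1 - w 0 ^ 2) = |w 1| := by
    rw [show 1 - w 0 ^ 2 = w 1 ^ 2 by linarith, Real.sqrt_sq_eq_abs]
  rcases le_or_gt 0 (w 1) with h1 | h1
  · exact ⟨Real.arccos (w 0), by rw [Real.cos_arccos h0 h0'],
      by rw [Real.sin_arccos, hsqrt, abs_of_nonneg h1]⟩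
  · refine ⟨-Real.arccos (w 0), by rw [Real.cos_neg, Real.cos_arccos h0 h0'], ?_⟩
    rw [Real.sin_neg, Real.sin_arccos, hsqrt, abs_of_neg h1, neg_neg]

lemma gvec_uvec_lb (g : SL2) : ∃ θ₀ : ℝ, ∀ θ : ℝ,
    gnorm g * |Real.cos (θ - θ₀)| ≤ ‖gvec g (uvec θ)‖ := by
  set S := ContinuousLinearMap.adjoint (T g) with hS
  have hSnorm : ‖S‖ = gnorm g := by
    rw [hS, gnorm_eq]
    exact LinearIsometryEquiv.norm_map ContinuousLinearMap.adjoint (T g)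
  obtain ⟨v, hv1, hv2⟩ := exists_unit_max S
  have hSv : ‖S v‖ = gnorm g := by rw [hv2, hSnorm]
  have hSvpos : (0:ℝ) < ‖S v‖ := by rw [hSv]; exact gnorm_pos g
  set w : V2 := ‖S v‖⁻¹ • S v with hwdef
  have hw : ‖w‖ = 1 := by
    rw [hwdef, norm_smul, norm_inv, norm_norm, inv_mul_cancel₀ hSvpos.ne']
  obtain ⟨θ₀, hw0, hw1⟩ := angle_of_unit w hw
  refine ⟨θ₀, fun θ => ?_⟩
  have hinner : (inner ℝ (uvec θ) w : ℝ) = Real.cos (θ - θ₀) := by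
    rw [inner_uvec, hw0, hw1, Real.cos_sub]
  have hinner2 : (inner ℝ (uvec θ) (S v) : ℝ) = ‖S v‖ * Real.cos (θ - θ₀) := by
    have : (inner ℝ (uvec θ) (S v) : ℝ) = ‖S v‖ * (inner ℝ (uvec θ) w : ℝ) := by
      rw [hwdef, real_inner_smul_right]
      field_simp
    rw [this, hinner]
  have hadj : (inner ℝ (uvec θ) (S v) : ℝ) = (inner ℝ (T g (uvec θ)) v : ℝ) :=
    ContinuousLinearMap.adjoint_inner_right (T g) (uvec θ) v
  calc gnorm g * |Real.cos (θ - θ₀)|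
      = |‖S v‖ * Real.cos (θ - θ₀)| := by
        rw [abs_mul, abs_of_pos hSvpos, hSv]
    _ = |(inner ℝ (T g (uvec θ)) v : ℝ)| := by rw [← hinner2, hadj]
    _ ≤ ‖T g (uvec θ)‖ * ‖v‖ := abs_real_inner_le_norm _ _
    _ = ‖gvec g (uvec θ)‖ := by rw [hv1, mul_one]; rfl

lemma norm_gvec_uvec_pos (g : SL2) (θ : ℝ) : 0 < ‖gvec g (uvec θ)‖ :=
  norm_pos_iff.mpr (gvec_ne_zero g (uvec_ne_zero θ))

lemma per_g {t : ℝ} (ht1 : -1 < t) (ht2 : t ≤ 0) (g : SL2) :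
    ∫ θ in (0:ℝ)..π, ‖gvec g (uvec θ)‖ ^ t ≤ gnorm g ^ t * ct t := by
  obtain ⟨θ₀, hθ₀⟩ := gvec_uvec_lb g
  have hconts : Continuous fun θ => ‖gvec g (uvec θ)‖ ^ t := by
    apply Continuous.rpow_const
    · exact continuous_norm.comp ((T g).continuous.comp continuous_uvec)
    · exact fun θ => Or.inl (norm_gvec_uvec_pos g θ).ne'
  have hII : IntervalIntegrable (fun θ => gnorm g ^ t * |Real.cos (θ - θ₀)| ^ t) volume 0 π :=
    (shifted_cos_ii ht1 ht2 θ₀).const_mul _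
  have hae : ∀ᵐ θ : ℝ, ‖gvec g (uvec θ)‖ ^ t ≤ gnorm g ^ t * |Real.cos (θ - θ₀)| ^ t := by
    have hnull : (volume : Measure ℝ) {θ | Real.cos (θ - θ₀) = 0} = 0 := by
      have hcount : Set.Countable {θ : ℝ | Real.cos (θ - θ₀) = 0} := by
        have hsub : {θ : ℝ | Real.cos (θ - θ₀) = 0} ⊆
            Set.range (fun k : ℤ => (2 * (k:ℝ) + 1) * π / 2 + θ₀) := by
          intro θ hθ
          rw [Set.mem_setOf_eq, Real.cos_eq_zero_iff] at hθ
          obtain ⟨k, hk⟩ := hθ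
          exact ⟨k, by simp only []; rw [← hk]; ring⟩
        exact (Set.countable_range _).mono hsub
      exact hcount.measure_zero _
    rw [ae_iff]
    refine measure_mono_null ?_ hnull
    intro θ hθ
    simp only [Set.mem_setOf_eq, not_le] at hθ ⊢
    by_contra hc
    apply absurd hθ
    push_neg
    have hpos : 0 < gnorm g * |Real.cos (θ - θ₀)| :=
      mul_pos (gnorm_pos g) (abs_pos.mpr hc)
    calc ‖gvec g (uvec θ)‖ ^ t
        ≤ (gnorm g * |Real.cos (θ - θ₀)|) ^ t :=
          Real.rpow_le_rpow_of_nonpos hpos (hθ₀ θ) ht2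
      _ = gnorm g ^ t * |Real.cos (θ - θ₀)| ^ t :=
          Real.mul_rpow (gnorm_pos g).le (abs_nonneg _)
  calc ∫ θ in (0:ℝ)..π, ‖gvec g (uvec θ)‖ ^ t
      ≤ ∫ θ in (0:ℝ)..π, gnorm g ^ t * |Real.cos (θ - θ₀)| ^ t := by
        apply intervalIntegral.integral_mono_ae Real.pi_pos.le
          (hconts.intervalIntegrable 0 π) hII
        exact hae
    _ = gnorm g ^ t * ∫ θ in (0:ℝ)..π, |Real.cos (θ - θ₀)| ^ t :=
        intervalIntegral.integral_const_mul _ _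
    _ = gnorm g ^ t * ct t := by rw [shifted_cos_integral]

end St11
namespace St11

open Real MeasureTheory Filter

lemma continuous_gxnorm (x : P1) : Continuous fun g : SL2 => gxnorm g x :=
  ((continuous_gvec x.rep).norm).div_const _

set_option maxHeartbeats 1000000 in
lemma main_bounds (ν : Measure SL2) [IsProbabilityMeasure ν]
    (K : Set SL2) (hKc : IsCompact K) (hKne : K.Nonempty) (hKnull : ν Kᶜ = 0)
    {t : ℝ} (ht1 : -1 < t) (ht2 : t ≤ 0) :
    0 < (∫ g, gnorm g ^ t ∂ν) ∧
    (∫ g, gnorm g ^ t ∂ν) ≤ (⨅ x : P1, ∫ g, gxnorm g x ^ t ∂ν) ∧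
    (⨅ x : P1, ∫ g, gxnorm g x ^ t ∂ν) ≤ (ct t / π) * ∫ g, gnorm g ^ t ∂ν := by
  haveI : Nonempty P1 := ⟨Projectivization.mk ℝ (uvec 0) (uvec_ne_zero 0)⟩
  have hπ := Real.pi_pos
  have hae : ∀ᵐ g ∂ν, g ∈ K := by
    rw [ae_iff]
    exact hKnull
  obtain ⟨g1, hg1K, hg1⟩ := hKc.exists_isMaxOn hKne continuous_gnorm.continuousOn
  obtain ⟨g2, hg2K, hg2⟩ := hKc.exists_isMaxOn hKne
    ((continuous_gnorm.comp continuous_invSL).continuousOn)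
  obtain ⟨g0, hg0K, hg0⟩ := hKc.exists_isMinOn hKne continuous_gnorm.continuousOn
  set B := gnorm g1 with hBdef
  set Binv := gnorm g2⁻¹ with hBinvdef
  set m := gnorm g0 with hmdef
  have hBpos : 0 < B := gnorm_pos g1
  have hBinvpos : 0 < Binv := gnorm_pos _
  have hmpos : 0 < m := gnorm_pos g0
  -- integrability of gnorm ^ t
  have hJle : Integrable (fun g => gnorm g ^ t) ν := by
    refine (integrable_const (m ^ t)).mono'
      ((continuous_gnorm.measurable.pow measurable_const).aestronglyMeasurable) ?_
    refine hae.mono fun g hg => ?_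
    rw [Real.norm_eq_abs, abs_of_nonneg (Real.rpow_nonneg (gnorm_pos g).le t)]
    exact Real.rpow_le_rpow_of_nonpos hmpos (hg0 hg) ht2
  have hJpos : 0 < ∫ g, gnorm g ^ t ∂ν := by
    calc (0:ℝ) < B ^ t := Real.rpow_pos_of_pos hBpos t
      _ = ∫ _, B ^ t ∂ν := by simp
      _ ≤ ∫ g, gnorm g ^ t ∂ν := integral_mono_ae (integrable_const _) hJle
          (hae.mono fun g hg => Real.rpow_le_rpow_of_nonpos (gnorm_pos g) (hg1 hg) ht2)
  -- pointwise upper bound via inverse norm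
  have hpt : ∀ (g : SL2) (u : V2), ‖u‖ = 1 → (gnorm g⁻¹)⁻¹ ≤ ‖gvec g u‖ := by
    intro g u hu
    have h := norm_gvec_ge g u
    rw [hu] at h
    rw [inv_le_iff_one_le_mul₀ (gnorm_pos g⁻¹)]
    calc (1:ℝ) ≤ gnorm g⁻¹ * ‖gvec g u‖ := h
      _ = ‖gvec g u‖ * gnorm g⁻¹ := mul_comm _ _
  have hpow : ∀ (g : SL2) (u : V2), ‖u‖ = 1 → ‖gvec g u‖ ^ t ≤ (gnorm g⁻¹) ^ (-t) := by
    intro g u hu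
    calc ‖gvec g u‖ ^ t ≤ ((gnorm g⁻¹)⁻¹) ^ t :=
        Real.rpow_le_rpow_of_nonpos (inv_pos.mpr (gnorm_pos _)) (hpt g u hu) ht2
      _ = (gnorm g⁻¹) ^ (-t) := by
        rw [Real.inv_rpow (gnorm_pos _).le, ← Real.rpow_neg (gnorm_pos _).le]
  -- integrability of gxnorm ^ t
  have hxup : ∀ (x : P1) (g : SL2), gxnorm g x ^ t ≤ (gnorm g⁻¹) ^ (-t) := by
    intro x g
    calc gxnorm g x ^ t ≤ ((gnorm g⁻¹)⁻¹) ^ t :=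
        Real.rpow_le_rpow_of_nonpos (inv_pos.mpr (gnorm_pos _)) (gxnorm_ge g x) ht2
      _ = (gnorm g⁻¹) ^ (-t) := by
        rw [Real.inv_rpow (gnorm_pos _).le, ← Real.rpow_neg (gnorm_pos _).le]
  have hBinvK : ∀ g ∈ K, (gnorm g⁻¹) ^ (-t) ≤ Binv ^ (-t) := fun g hg =>
    Real.rpow_le_rpow (gnorm_pos _).le (hg2 hg) (neg_nonneg.mpr ht2)
  have hxint : ∀ x : P1, Integrable (fun g => gxnorm g x ^ t) ν := by
    intro x
    refine (integrable_const (Binv ^ (-t))).mono'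
      (((continuous_gxnorm x).measurable.pow measurable_const).aestronglyMeasurable) ?_
    refine hae.mono fun g hg => ?_
    rw [Real.norm_eq_abs, abs_of_nonneg (Real.rpow_nonneg (gxnorm_pos g x).le t)]
    exact (hxup x g).trans (hBinvK g hg)
  -- Claim A
  have hA : ∀ x : P1, (∫ g, gnorm g ^ t ∂ν) ≤ ∫ g, gxnorm g x ^ t ∂ν := fun x =>
    integral_mono_ae hJle (hxint x) (Filter.Eventually.of_forall fun g =>
      Real.rpow_le_rpow_of_nonpos (gxnorm_pos g x) (gxnorm_le g x) ht2)
  have hbdd : BddBelow (Set.range fun x : P1 => ∫ g, gxnorm g x ^ t ∂ν) :=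
    ⟨∫ g, gnorm g ^ t ∂ν, Set.forall_mem_range.mpr hA⟩
  refine ⟨hJpos, le_ciInf hA, ?_⟩
  -- Claim B
  set ρ : Measure ℝ := volume.restrict (Set.Ioc 0 π) with hρdef
  set H : ℝ × SL2 → ℝ := fun p => ‖gvec p.2 (uvec p.1)‖ ^ t with hHdef
  have hHcont : Continuous H := by
    apply Continuous.rpow_const
    · exact continuous_norm.comp
        (isBoundedBilinearMap_apply.continuous.comp
          ((continuous_T.comp continuous_snd).prodMk (continuous_uvec.comp continuous_fst)))
    · exact fun p => Or.inl (norm_gvec_uvec_pos _ _).ne'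
  have hHnonneg : ∀ p, 0 ≤ H p := fun p => Real.rpow_nonneg (norm_nonneg _) t
  have hHle1 : ∀ p : ℝ × SL2, H p ≤ (gnorm p.2⁻¹) ^ (-t) := fun p =>
    hpow p.2 (uvec p.1) (norm_uvec p.1)
  have haeP : ∀ᵐ p ∂(ρ.prod ν), p.2 ∈ K := by
    rw [ae_iff]
    have hsub : {p : ℝ × SL2 | ¬ p.2 ∈ K} ⊆ (Set.univ : Set ℝ) ×ˢ Kᶜ :=
      fun p hp => ⟨trivial, hp⟩
    refine measure_mono_null hsub ?_
    rw [Measure.prod_prod, hKnull, mul_zero]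
  have hHint : Integrable H (ρ.prod ν) := by
    refine (integrable_const (Binv ^ (-t))).mono' hHcont.measurable.aestronglyMeasurable ?_
    refine haeP.mono fun p hp => ?_
    rw [Real.norm_eq_abs, abs_of_nonneg (hHnonneg p)]
    exact (hHle1 p).trans (hBinvK p.2 hp)
  set Φ : ℝ → ℝ := fun θ => ∫ g, H (θ, g) ∂ν with hΦdef
  have hbound_int : Integrable (fun g => (gnorm g⁻¹) ^ (-t)) ν := by
    refine (integrable_const (Binv ^ (-t))).mono'
      (((continuous_gnorm.comp continuous_invSL).measurable.pow
        measurable_const).aestronglyMeasurable) (hae.mono fun g hg => ?_)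
    rw [Real.norm_eq_abs, abs_of_nonneg (Real.rpow_nonneg (gnorm_pos _).le _)]
    exact hBinvK g hg
  have hΦcont : Continuous Φ := by
    refine continuous_of_dominated (bound := fun g => (gnorm g⁻¹) ^ (-t)) ?_ ?_ hbound_int ?_
    · intro θ
      exact (hHcont.comp (continuous_const.prodMk continuous_id)).aestronglyMeasurable
    · intro θ
      refine Filter.Eventually.of_forall fun g => ?_
      rw [Real.norm_eq_abs, abs_of_nonneg (hHnonneg (θ, g))]
      exact hHle1 (θ, g)
    · exact Filter.Eventually.of_forall fun g =>
        hHcont.comp (continuous_id.prodMk continuous_const)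
  have hinfΦ : ∀ θ : ℝ, (⨅ x : P1, ∫ g, gxnorm g x ^ t ∂ν) ≤ Φ θ := by
    intro θ
    refine (ciInf_le hbdd (Projectivization.mk ℝ (uvec θ) (uvec_ne_zero θ))).trans
      (le_of_eq ?_)
    refine integral_congr_ae (Filter.Eventually.of_forall fun g => ?_)
    show gxnorm g (Projectivization.mk ℝ (uvec θ) (uvec_ne_zero θ)) ^ t = H (θ, g)
    rw [gxnorm_mk, norm_uvec, div_one]
  have key : π * (⨅ x : P1, ∫ g, gxnorm g x ^ t ∂ν) ≤ ∫ θ in (0:ℝ)..π, Φ θ := by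
    have h1 : ∫ _ in (0:ℝ)..π, (⨅ x : P1, ∫ g, gxnorm g x ^ t ∂ν) =
        π * (⨅ x : P1, ∫ g, gxnorm g x ^ t ∂ν) := by
      rw [intervalIntegral.integral_const, smul_eq_mul, sub_zero]
    rw [← h1]
    exact intervalIntegral.integral_mono_on hπ.le intervalIntegrable_const
      (hΦcont.intervalIntegrable 0 π) (fun θ _ => hinfΦ θ)
  have hswap : ∫ θ in (0:ℝ)..π, Φ θ = ∫ g, (∫ θ in (0:ℝ)..π, H (θ, g)) ∂ν := by
    rw [intervalIntegral.integral_of_le hπ.le]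
    have hsw := MeasureTheory.integral_integral_swap (μ := ρ) (ν := ν)
      (f := fun θ g => H (θ, g)) hHint
    calc ∫ θ in Set.Ioc 0 π, Φ θ = ∫ g, ∫ θ, H (θ, g) ∂ρ ∂ν := hsw
      _ = ∫ g, (∫ θ in (0:ℝ)..π, H (θ, g)) ∂ν := by
        refine integral_congr_ae (Filter.Eventually.of_forall fun g => ?_)
        show (∫ θ, H (θ, g) ∂ρ) = ∫ θ in (0:ℝ)..π, H (θ, g)
        rw [intervalIntegral.integral_of_le hπ.le]
  have hLHSint : Integrable (fun g => ∫ θ in (0:ℝ)..π, H (θ, g)) ν := by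
    have h2 := (hHint.swap).integral_prod_left
    have heq : (fun g => ∫ θ in (0:ℝ)..π, H (θ, g)) = fun g => ∫ θ, H (θ, g) ∂ρ :=
      funext fun g => intervalIntegral.integral_of_le hπ.le
    rw [heq]
    exact h2
  have hRHSint : Integrable (fun g => gnorm g ^ t * ct t) ν := hJle.mul_const _
  have hfinal : ∫ θ in (0:ℝ)..π, Φ θ ≤ ct t * ∫ g, gnorm g ^ t ∂ν := by
    rw [hswap]
    calc ∫ g, (∫ θ in (0:ℝ)..π, H (θ, g)) ∂ν ≤ ∫ g, gnorm g ^ t * ct t ∂ν :=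
        integral_mono_ae hLHSint hRHSint (Filter.Eventually.of_forall fun g => per_g ht1 ht2 g)
      _ = ct t * ∫ g, gnorm g ^ t ∂ν := by rw [integral_mul_const, mul_comm]
  have hchain := key.trans hfinal
  have h9 : (⨅ x : P1, ∫ g, gxnorm g x ^ t ∂ν) ≤ ct t * (∫ g, gnorm g ^ t ∂ν) / π := by
    rw [le_div_iff₀ hπ]
    linarith
  calc (⨅ x : P1, ∫ g, gxnorm g x ^ t ∂ν) ≤ ct t * (∫ g, gnorm g ^ t ∂ν) / π := h9
    _ = ct t / π * ∫ g, gnorm g ^ t ∂ν := by ring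

end St11
/-- For `t ∈ (-1,0]` the sequence `(1/n) log inf_x ∫ |gx|^t dμⁿ(g)` converges
to `k(t)`. -/
theorem statement11 (μ : Measure SL2) [IsProbabilityMeasure μ]
    (hcs : IsCompactlySupported μ)
    (k : ℝ → ℝ) (hk : KTendsto μ k)
    (t : ℝ) (ht1 : -1 < t) (ht2 : t ≤ 0) :
    Filter.Tendsto (fun n : ℕ =>
        (n : ℝ)⁻¹ * Real.log (⨅ x : P1, ∫ g, gxnorm g x ^ t ∂ convPow μ n))
      Filter.atTop (nhds (k t)) := by
  have hbnd : ∀ n : ℕ,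
      0 < (∫ g, gnorm g ^ t ∂ convPow μ n) ∧
      (∫ g, gnorm g ^ t ∂ convPow μ n) ≤
        (⨅ x : P1, ∫ g, gxnorm g x ^ t ∂ convPow μ n) ∧
      (⨅ x : P1, ∫ g, gxnorm g x ^ t ∂ convPow μ n) ≤
        (St11.ct t / Real.pi) * ∫ g, gnorm g ^ t ∂ convPow μ n := by
    intro n
    obtain ⟨K, hKc, hKne, hKnull⟩ := St11.convPow_compact μ hcs n
    haveI := St11.convPow_prob μ n
    exact St11.main_bounds (convPow μ n) K hKc hKne hKnull ht1 ht2
  set C := St11.ct t / Real.pi with hC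
  have hC1 : (1:ℝ) ≤ C := by
    obtain ⟨h1, h2, h3⟩ := hbnd 0
    nlinarith [le_trans h2 h3]
  have hCpos : (0:ℝ) < C := lt_of_lt_of_le one_pos hC1
  have hlow : ∀ n : ℕ, kSeq μ t n ≤
      (n:ℝ)⁻¹ * Real.log (⨅ x : P1, ∫ g, gxnorm g x ^ t ∂ convPow μ n) := by
    intro n
    rw [kSeq]
    apply mul_le_mul_of_nonneg_left _ (by positivity)
    exact Real.log_le_log (hbnd n).1 (hbnd n).2.1
  have hup : ∀ n : ℕ,
      (n:ℝ)⁻¹ * Real.log (⨅ x : P1, ∫ g, gxnorm g x ^ t ∂ convPow μ n) ≤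
      kSeq μ t n + (n:ℝ)⁻¹ * Real.log C := by
    intro n
    obtain ⟨h1, h2, h3⟩ := hbnd n
    have hIpos : 0 < (⨅ x : P1, ∫ g, gxnorm g x ^ t ∂ convPow μ n) := lt_of_lt_of_le h1 h2
    have hlog : Real.log (⨅ x : P1, ∫ g, gxnorm g x ^ t ∂ convPow μ n) ≤
        Real.log C + Real.log (∫ g, gnorm g ^ t ∂ convPow μ n) := by
      calc Real.log (⨅ x : P1, ∫ g, gxnorm g x ^ t ∂ convPow μ n)
          ≤ Real.log (C * ∫ g, gnorm g ^ t ∂ convPow μ n) := Real.log_le_log hIpos h3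
        _ = Real.log C + Real.log (∫ g, gnorm g ^ t ∂ convPow μ n) :=
            Real.log_mul hCpos.ne' h1.ne'
    calc (n:ℝ)⁻¹ * Real.log (⨅ x : P1, ∫ g, gxnorm g x ^ t ∂ convPow μ n)
        ≤ (n:ℝ)⁻¹ * (Real.log C + Real.log (∫ g, gnorm g ^ t ∂ convPow μ n)) :=
          mul_le_mul_of_nonneg_left hlog (by positivity)
      _ = kSeq μ t n + (n:ℝ)⁻¹ * Real.log C := by rw [kSeq]; ring
  have h0 : Filter.Tendsto (fun n : ℕ => (n:ℝ)⁻¹ * Real.log C) Filter.atTop (nhds 0) := by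
    have := tendsto_inv_atTop_nhds_zero_nat.mul_const (Real.log C)
    simpa using this
  have hupT : Filter.Tendsto (fun n : ℕ => kSeq μ t n + (n:ℝ)⁻¹ * Real.log C)
      Filter.atTop (nhds (k t)) := by
    simpa using (hk t).add h0
  exact tendsto_of_tendsto_of_tendsto_of_le_of_le (hk t) hupT hlow hup
end
end

section
/- For all −1 < t < 0 and 0 < ζ ≤ 1, there exists C > 0 such that for every g ∈ SL(2,ℝ) and all x, y ∈ P: | |gx|^t − |gy|^t | ≤ C |g|^{2ζ−t} d_P(x,y)^ζ. -/
open MeasureTheory Filter Topology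
open scoped ENNReal

noncomputable section

namespace Stmt15Aux

lemma sq_le_to_le {X Y : ℝ} (hX : 0 ≤ X) (hY : 0 ≤ Y) (h : X ^ 2 ≤ Y ^ 2) : X ≤ Y := by
  nlinarith

lemma aux_gvec_apply (g : SL2) (u : V2) (i : Fin 2) :
    gvec g u i = (g : Matrix (Fin 2) (Fin 2) ℝ) i 0 * u 0
      + (g : Matrix (Fin 2) (Fin 2) ℝ) i 1 * u 1 := by
  have h := Matrix.ofLp_toEuclideanCLM (𝕜 := ℝ) (g : Matrix (Fin 2) (Fin 2) ℝ) u
  have h2 := congrFun h i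
  exact h2.trans (by simp [Matrix.mulVec, dotProduct, Fin.sum_univ_two])

lemma aux_normsq (u : V2) : ‖u‖ ^ 2 = u 0 ^ 2 + u 1 ^ 2 := by
  rw [EuclideanSpace.norm_eq, Real.sq_sqrt (by positivity)]
  simp [Fin.sum_univ_two, sq_abs]

lemma gvec_norm_le (g : SL2) (u : V2) : ‖gvec g u‖ ≤ gnorm g * ‖u‖ :=
  (Matrix.toEuclideanCLM (𝕜 := ℝ) (g : Matrix (Fin 2) (Fin 2) ℝ)).le_opNorm u

lemma gvec_smul (g : SL2) (c : ℝ) (u : V2) : gvec g (c • u) = c • gvec g u :=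
  (Matrix.toEuclideanCLM (𝕜 := ℝ) (g : Matrix (Fin 2) (Fin 2) ℝ)).map_smul c u

lemma gvec_sub (g : SL2) (u v : V2) : gvec g (u - v) = gvec g u - gvec g v := by
  simp [gvec, map_sub]

lemma gvec_neg (g : SL2) (u : V2) : gvec g (-u) = - gvec g u := by
  simp [gvec, map_neg]

lemma gnorm_pos (g : SL2) : 0 < gnorm g := by
  have he : (EuclideanSpace.single (0 : Fin 2) (1:ℝ)) ≠ 0 := by
    intro h
    have := congrFun (congrArg (fun (w : V2) => (w : Fin 2 → ℝ)) h) 0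
    simp [EuclideanSpace.single_apply] at this
  have h1 : 0 < ‖gvec g (EuclideanSpace.single (0 : Fin 2) (1:ℝ))‖ :=
    norm_pos_iff.mpr (gvec_ne_zero g he)
  have h2 := gvec_norm_le g (EuclideanSpace.single (0 : Fin 2) (1:ℝ))
  rw [EuclideanSpace.norm_single] at h2
  simp only [norm_one, mul_one] at h2
  linarith

lemma entries_sq_le (g : SL2) (j : Fin 2) :
    (g : Matrix (Fin 2) (Fin 2) ℝ) 0 j ^ 2 + (g : Matrix (Fin 2) (Fin 2) ℝ) 1 j ^ 2
      ≤ gnorm g ^ 2 := by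
  set e : V2 := EuclideanSpace.single j (1:ℝ) with he
  have h0 : gvec g e 0 = (g : Matrix (Fin 2) (Fin 2) ℝ) 0 j := by
    rw [aux_gvec_apply]
    fin_cases j <;> simp [he, EuclideanSpace.single_apply]
  have h1 : gvec g e 1 = (g : Matrix (Fin 2) (Fin 2) ℝ) 1 j := by
    rw [aux_gvec_apply]
    fin_cases j <;> simp [he, EuclideanSpace.single_apply]
  have hle := gvec_norm_le g e
  rw [he, EuclideanSpace.norm_single, norm_one, mul_one] at hle
  have hsq : ‖gvec g e‖ ^ 2 ≤ gnorm g ^ 2 := by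
    have := gnorm_pos g
    nlinarith [norm_nonneg (gvec g e)]
  rw [aux_normsq, h0, h1] at hsq
  exact hsq

lemma gvec_inv_le (g : SL2) (w : V2) :
    ‖gvec g⁻¹ w‖ ≤ Real.sqrt 2 * gnorm g * ‖w‖ := by
  set A := (g : Matrix (Fin 2) (Fin 2) ℝ) with hA
  have hinv : ((g⁻¹ : SL2) : Matrix (Fin 2) (Fin 2) ℝ) = !![A 1 1, -A 0 1; -A 1 0, A 0 0] := by
    rw [Matrix.SpecialLinearGroup.coe_inv, Matrix.adjugate_fin_two]
  have h0 : gvec g⁻¹ w 0 = A 1 1 * w 0 - A 0 1 * w 1 := by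
    rw [aux_gvec_apply, hinv]; norm_num [Matrix.cons_val_zero, Matrix.cons_val_one]; ring
  have h1 : gvec g⁻¹ w 1 = - A 1 0 * w 0 + A 0 0 * w 1 := by
    rw [aux_gvec_apply, hinv]; norm_num [Matrix.cons_val_zero, Matrix.cons_val_one]
  have he0 := entries_sq_le g 0
  have he1 := entries_sq_le g 1
  have hsq : ‖gvec g⁻¹ w‖ ^ 2 ≤ (Real.sqrt 2 * gnorm g * ‖w‖) ^ 2 := by
    have hs2 : Real.sqrt 2 ^ 2 = 2 := Real.sq_sqrt (by norm_num)
    rw [aux_normsq, h0, h1, mul_pow, mul_pow, hs2, aux_normsq w]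
    nlinarith [sq_nonneg (A 1 1 * w 1 + A 0 1 * w 0), sq_nonneg (A 1 0 * w 1 + A 0 0 * w 0),
      sq_nonneg (w 0), sq_nonneg (w 1)]
  exact sq_le_to_le (norm_nonneg _) (mul_nonneg (mul_nonneg (Real.sqrt_nonneg 2) (gnorm_pos g).le) (norm_nonneg w)) hsq

lemma gxnorm_lower (g : SL2) (x : P1) :
    (Real.sqrt 2 * gnorm g)⁻¹ ≤ gxnorm g x := by
  have hu : x.rep ≠ 0 := x.rep_nonzero
  have hu0 : (0:ℝ) < ‖x.rep‖ := norm_pos_iff.mpr hu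
  have hs : 0 < Real.sqrt 2 * gnorm g := by
    have := gnorm_pos g
    positivity
  have hG : (0:ℝ) < ‖gvec g x.rep‖ := norm_pos_iff.mpr (gvec_ne_zero g hu)
  have hrec : x.rep = gvec g⁻¹ (gvec g x.rep) := by
    rw [gvec_mul, inv_mul_cancel, gvec_one]
  have hkey : ‖x.rep‖ ≤ Real.sqrt 2 * gnorm g * ‖gvec g x.rep‖ := by
    conv_lhs => rw [hrec]
    exact gvec_inv_le g _
  rw [gxnorm, le_div_iff₀ hu0, inv_mul_le_iff₀ hs]
  linarith

lemma unit_dist {p q : V2} (hp : ‖p‖ = 1) (hq : ‖q‖ = 1)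
    (hpq : 0 ≤ p 0 * q 0 + p 1 * q 1) :
    ‖p - q‖ ≤ Real.sqrt 2 * |p 0 * q 1 - p 1 * q 0| := by
  have hp2 : p 0 ^ 2 + p 1 ^ 2 = 1 := by rw [← aux_normsq, hp]; norm_num
  have hq2 : q 0 ^ 2 + q 1 ^ 2 = 1 := by rw [← aux_normsq, hq]; norm_num
  have lagrange : (p 0 * q 1 - p 1 * q 0) ^ 2 + (p 0 * q 0 + p 1 * q 1) ^ 2
      = (p 0 ^ 2 + p 1 ^ 2) * (q 0 ^ 2 + q 1 ^ 2) := by ring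
  have hsub : ‖p - q‖ ^ 2 = (p 0 - q 0) ^ 2 + (p 1 - q 1) ^ 2 := by
    rw [aux_normsq]; simp [PiLp.sub_apply]
  have key : ‖p - q‖ ^ 2 ≤ (Real.sqrt 2 * |p 0 * q 1 - p 1 * q 0|) ^ 2 := by
    have hs2 : Real.sqrt 2 ^ 2 = 2 := Real.sq_sqrt (by norm_num)
    rw [hsub, mul_pow, hs2, sq_abs]
    nlinarith [sq_nonneg (p 0 * q 0 + p 1 * q 1), sq_nonneg (p 0 * q 1 - p 1 * q 0),
      mul_nonneg hpq hpq]
  exact sq_le_to_le (norm_nonneg _) (by positivity) key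

lemma dist_key (g : SL2) (x y : P1) :
    |gxnorm g x - gxnorm g y| ≤ Real.sqrt 2 * gnorm g * dP x y := by
  have hu : x.rep ≠ 0 := x.rep_nonzero
  have hv : y.rep ≠ 0 := y.rep_nonzero
  have hu0 : (0:ℝ) < ‖x.rep‖ := norm_pos_iff.mpr hu
  have hv0 : (0:ℝ) < ‖y.rep‖ := norm_pos_iff.mpr hv
  set u := x.rep with hudef
  set v := y.rep with hvdef
  set p : V2 := ‖u‖⁻¹ • u with hpdef
  set q0 : V2 := ‖v‖⁻¹ • v with hq0def
  have hp1 : ‖p‖ = 1 := by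
    rw [hpdef, norm_smul, norm_inv, norm_norm, inv_mul_cancel₀ (ne_of_gt hu0)]
  have hq01 : ‖q0‖ = 1 := by
    rw [hq0def, norm_smul, norm_inv, norm_norm, inv_mul_cancel₀ (ne_of_gt hv0)]
  have hgp : gxnorm g x = ‖gvec g p‖ := by
    rw [gxnorm, hpdef, gvec_smul, norm_smul, norm_inv, norm_norm]
    rw [div_eq_inv_mul]
  have hgq : gxnorm g y = ‖gvec g q0‖ := by
    rw [gxnorm, hq0def, gvec_smul, norm_smul, norm_inv, norm_norm]
    rw [div_eq_inv_mul]
  have hcross : p 0 * q0 1 - p 1 * q0 0 = (‖u‖⁻¹ * ‖v‖⁻¹) * (u 0 * v 1 - u 1 * v 0) := by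
    simp only [hpdef, hq0def, PiLp.smul_apply, smul_eq_mul]
    ring
  have hdP : dP x y = |p 0 * q0 1 - p 1 * q0 0| := by
    rw [dP, hcross, abs_mul, abs_of_pos (by positivity : (0:ℝ) < ‖u‖⁻¹ * ‖v‖⁻¹)]
    rw [← hudef, ← hvdef]
    field_simp
  -- choose sign
  have main : ∀ q : V2, ‖q‖ = 1 → 0 ≤ p 0 * q 0 + p 1 * q 1 →
      ‖gvec g q‖ = ‖gvec g q0‖ → |p 0 * q 1 - p 1 * q 0| = |p 0 * q0 1 - p 1 * q0 0| →
      |gxnorm g x - gxnorm g y| ≤ Real.sqrt 2 * gnorm g * dP x y := by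
    intro q hq1 hinner hnq hcr
    rw [hgp, hgq, ← hnq, hdP, ← hcr]
    calc |‖gvec g p‖ - ‖gvec g q‖| ≤ ‖gvec g p - gvec g q‖ := abs_norm_sub_norm_le _ _
      _ = ‖gvec g (p - q)‖ := by rw [gvec_sub]
      _ ≤ gnorm g * ‖p - q‖ := gvec_norm_le g _
      _ ≤ gnorm g * (Real.sqrt 2 * |p 0 * q 1 - p 1 * q 0|) := by
          exact mul_le_mul_of_nonneg_left (unit_dist hp1 hq1 hinner) (gnorm_pos g).le
      _ = Real.sqrt 2 * gnorm g * |p 0 * q 1 - p 1 * q 0| := by ring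
  rcases le_or_gt 0 (p 0 * q0 0 + p 1 * q0 1) with hc | hc
  · exact main q0 hq01 hc rfl rfl
  · refine main (-q0) (by rw [norm_neg]; exact hq01) ?_ ?_ ?_
    · simp only [PiLp.neg_apply]
      nlinarith
    · rw [gvec_neg, norm_neg]
    · simp only [PiLp.neg_apply]
      rw [show p 0 * (-q0 1) - p 1 * (-q0 0) = -(p 0 * q0 1 - p 1 * q0 0) by ring, abs_neg]

lemma rpow_lip {t : ℝ} (ht : t < 0) {ε a b : ℝ} (hε : 0 < ε) (ha : ε ≤ a) (hb : ε ≤ b) :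
    |a ^ t - b ^ t| ≤ |t| * ε ^ (t - 1) * |a - b| := by
  have := Convex.norm_image_sub_le_of_norm_hasDerivWithin_le
    (f := fun x : ℝ => x ^ t) (f' := fun x : ℝ => t * x ^ (t - 1)) (s := Set.Ici ε)
    (fun x hx => (Real.hasDerivAt_rpow_const
      (Or.inl (ne_of_gt (lt_of_lt_of_le hε hx)))).hasDerivWithinAt)
    (fun x hx => by
      have hx0 : 0 < x := lt_of_lt_of_le hε hx
      rw [Real.norm_eq_abs, abs_mul, abs_of_nonneg (Real.rpow_nonneg hx0.le _)]
      exact mul_le_mul_of_nonneg_left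
        (Real.rpow_le_rpow_of_nonpos hε hx (by linarith)) (abs_nonneg t))
    (convex_Ici ε) hb ha
  simpa [Real.norm_eq_abs] using this

lemma interp {X A B ζ : ℝ} (hX : 0 ≤ X) (hA : X ≤ A) (hB : X ≤ B)
    (hz1 : 0 ≤ ζ) (hz2 : ζ ≤ 1) : X ≤ A ^ ζ * B ^ (1 - ζ) := by
  rcases eq_or_lt_of_le hX with h0 | h0
  · have hA0 : 0 ≤ A := le_trans hX hA
    have hB0 : 0 ≤ B := le_trans hX hB
    rw [← h0]
    positivity
  · have heq : X = X ^ ζ * X ^ (1 - ζ) := by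
      rw [← Real.rpow_add h0, show ζ + (1 - ζ) = 1 by ring, Real.rpow_one]
    rw [heq]
    exact
        mul_le_mul (Real.rpow_le_rpow hX hA hz1) (Real.rpow_le_rpow hX hB (by linarith))
          (Real.rpow_nonneg hX _) (Real.rpow_nonneg (le_trans hX hA) _)

end Stmt15Aux

open Stmt15Aux in
/-- Hölder estimate for `x ↦ |gx|^t`. -/
theorem statement15 (t ζ : ℝ) (ht1 : -1 < t) (ht2 : t < 0) (hζ1 : 0 < ζ) (hζ2 : ζ ≤ 1) :
    ∃ C : ℝ, 0 < C ∧ ∀ (g : SL2) (x y : P1),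
      |gxnorm g x ^ t - gxnorm g y ^ t| ≤ C * gnorm g ^ (2 * ζ - t) * dP x y ^ ζ := by
  have ht0 : (0:ℝ) < |t| := abs_pos.mpr (ne_of_lt ht2)
  have hs2 : (0:ℝ) < Real.sqrt 2 := by positivity
  refine ⟨|t| ^ ζ * 2 ^ (1 - ζ) * Real.sqrt 2 ^ (2 * ζ - t), ?_, ?_⟩
  · exact mul_pos (mul_pos (Real.rpow_pos_of_pos ht0 _) (Real.rpow_pos_of_pos two_pos _))
      (Real.rpow_pos_of_pos hs2 _)
  intro g x y
  have hN : 0 < gnorm g := gnorm_pos g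
  set s : ℝ := Real.sqrt 2 * gnorm g with hsdef
  have hs : 0 < s := by positivity
  set a := gxnorm g x with hadef
  set b := gxnorm g y with hbdef
  set d := dP x y with hddef
  have hd0 : 0 ≤ d := by
    rw [hddef, dP]
    positivity
  have ha : s⁻¹ ≤ a := gxnorm_lower g x
  have hb : s⁻¹ ≤ b := gxnorm_lower g y
  have hεpos : 0 < s⁻¹ := inv_pos.mpr hs
  have hab : |a - b| ≤ s * d := dist_key g x y
  have hεpow : (s⁻¹ : ℝ) ^ (t - 1) = s ^ (1 - t) := by
    rw [Real.inv_rpow hs.le, ← Real.rpow_neg hs.le, neg_sub]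
  have h1 : |a ^ t - b ^ t| ≤ |t| * s ^ (2 - t) * d := by
    have hl := rpow_lip ht2 hεpos ha hb
    rw [hεpow] at hl
    calc |a ^ t - b ^ t| ≤ |t| * s ^ (1 - t) * |a - b| := hl
      _ ≤ |t| * s ^ (1 - t) * (s * d) :=
          mul_le_mul_of_nonneg_left hab (by positivity)
      _ = |t| * (s ^ (1 - t) * s ^ (1 : ℝ)) * d := by rw [Real.rpow_one]; ring
      _ = |t| * s ^ (2 - t) * d := by
          rw [← Real.rpow_add hs, show (1 - t) + 1 = 2 - t by ring]
  have h2 : |a ^ t - b ^ t| ≤ 2 * s ^ (-t) := by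
    have hat : a ^ t ≤ s ^ (-t) := by
      have h := Real.rpow_le_rpow_of_nonpos hεpos ha ht2.le
      rwa [Real.inv_rpow hs.le, ← Real.rpow_neg hs.le] at h
    have hbt : b ^ t ≤ s ^ (-t) := by
      have h := Real.rpow_le_rpow_of_nonpos hεpos hb ht2.le
      rwa [Real.inv_rpow hs.le, ← Real.rpow_neg hs.le] at h
    have ha0 : 0 ≤ a ^ t := Real.rpow_nonneg (le_trans hεpos.le ha) t
    have hb0 : 0 ≤ b ^ t := Real.rpow_nonneg (le_trans hεpos.le hb) t
    rw [abs_sub_le_iff]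
    constructor <;> linarith
  have hX := interp (abs_nonneg (a ^ t - b ^ t)) h1 h2 hζ1.le hζ2
  have hss : s ^ ((2 - t) * ζ) * s ^ (-t * (1 - ζ))
      = Real.sqrt 2 ^ (2 * ζ - t) * gnorm g ^ (2 * ζ - t) := by
    rw [← Real.rpow_add hs, show (2 - t) * ζ + -t * (1 - ζ) = 2 * ζ - t by ring, hsdef,
      Real.mul_rpow (Real.sqrt_nonneg 2) hN.le]
  have halg : (|t| * s ^ (2 - t) * d) ^ ζ * (2 * s ^ (-t)) ^ (1 - ζ)
      = |t| ^ ζ * 2 ^ (1 - ζ) * Real.sqrt 2 ^ (2 * ζ - t) * (gnorm g ^ (2 * ζ - t) * d ^ ζ) := by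
    rw [Real.mul_rpow (by positivity) hd0,
      Real.mul_rpow (abs_nonneg t) (Real.rpow_nonneg hs.le _),
      Real.mul_rpow (by norm_num) (Real.rpow_nonneg hs.le _),
      ← Real.rpow_mul hs.le, ← Real.rpow_mul hs.le]
    calc |t| ^ ζ * s ^ ((2 - t) * ζ) * d ^ ζ * (2 ^ (1 - ζ) * s ^ (-t * (1 - ζ)))
        = s ^ ((2 - t) * ζ) * s ^ (-t * (1 - ζ)) * (|t| ^ ζ * 2 ^ (1 - ζ) * d ^ ζ) := by ring
      _ = |t| ^ ζ * 2 ^ (1 - ζ) * Real.sqrt 2 ^ (2 * ζ - t) * (gnorm g ^ (2 * ζ - t) * d ^ ζ) := by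
          rw [hss]; ring
  calc |a ^ t - b ^ t| ≤ (|t| * s ^ (2 - t) * d) ^ ζ * (2 * s ^ (-t)) ^ (1 - ζ) := hX
    _ = |t| ^ ζ * 2 ^ (1 - ζ) * Real.sqrt 2 ^ (2 * ζ - t) * (gnorm g ^ (2 * ζ - t) * d ^ ζ) := halg
    _ = |t| ^ ζ * 2 ^ (1 - ζ) * Real.sqrt 2 ^ (2 * ζ - t) * gnorm g ^ (2 * ζ - t) * d ^ ζ := by
        ring
end
end
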